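/- arXiv:2206.12135 — 6 statements merged into one kernel-verified Lean document; each statement's English description precedes it below -/
import Mathlib

section
/- Let τ be a vocabulary consisting of finitely many constant symbols a_1,…,a_ℓ, finitely many unary relation symbols Ū, and finitely many binary relation symbols R̄, and let φ be a first-order sentence over τ. Then there exist a natural number r depending only on τ, a vocabulary τ' consisting of the binary relation symbols R̄ together with a finite set of unary relation symbols Ū' containing Ū and no constant symbols, and first-order sentences ψ_1,…,ψ_r over τ', such that for every n ∈ ℕ one has f_φ(n) = Σ_{i=1}^r Sp_{ψ_i}(n) (equality of natural numbers, not merely a modular equality). -/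
open FirstOrder Language

/-- A purely relational language with relation symbols `Rel k` of arity `k`. -/
def relLang (Rel : ℕ → Type) : Language :=
  ⟨fun _ => Empty, Rel⟩

/-- A language with constant symbols indexed by `Fin ℓ`, relation symbols `Rel k`
of arity `k`, and no other non-logical symbols. -/
def cLang (ℓ : ℕ) (Rel : ℕ → Type) : Language :=
  ⟨fun k => match k with | 0 => Fin ℓ | _ + 1 => Empty, Rel⟩

/-- The `relLang Rel`-structure on `M` determined by an interpretation `S`
of the relation symbols. -/
def relLang.mkStructure {Rel : ℕ → Type} {M : Type}
    (S : ∀ k, Rel k → (Fin k → M) → Prop) : (relLang Rel).Structure M where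
  funMap := fun f _ => f.elim
  RelMap := fun {k} r v => S k r v

/-- The `cLang ℓ Rel`-structure on `M` determined by an interpretation `c` of the
constant symbols and an interpretation `S` of the relation symbols. -/
def cLang.mkStructure {ℓ : ℕ} {Rel : ℕ → Type} {M : Type}
    (c : Fin ℓ → M) (S : ∀ k, Rel k → (Fin k → M) → Prop) :
    (cLang ℓ Rel).Structure M where
  funMap := fun {k} f _ =>
    match k, f with
    | 0, i => c i
  RelMap := fun {k} r v => S k r v

/-- `Sp_φ(n)`: the number of interpretations of the relation symbols on `[n]`
satisfying the sentence `φ` of a relational language. -/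
noncomputable def spCount {Rel : ℕ → Type} (φ : (relLang Rel).Sentence) (n : ℕ) : ℕ :=
  Nat.card { S : ∀ k, Rel k → (Fin k → Fin n) → Prop //
    letI := relLang.mkStructure S
    Fin n ⊨ φ }

/-- `f_φ(n)`: the number of interpretations of the relation symbols on `[n + ℓ]`
satisfying `φ`, where the `i`-th (hard-wired) constant is interpreted as `n + i`. -/
noncomputable def fCount (ℓ : ℕ) {Rel : ℕ → Type} (φ : (cLang ℓ Rel).Sentence) (n : ℕ) : ℕ :=
  Nat.card { S : ∀ k, Rel k → (Fin k → Fin (n + ℓ)) → Prop //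
    letI := cLang.mkStructure (fun i => Fin.natAdd n i) S
    Fin (n + ℓ) ⊨ φ }

/-- Relation symbols: `z` nullary, `u` unary, `b` binary, none of higher arity. -/
def rels012 (z u b : ℕ) : ℕ → Type := fun k =>
  match k with
  | 0 => Fin z
  | 1 => Fin u
  | 2 => Fin b
  | _ => Empty

/-! ### Auxiliary general lemmas -/

open Classical in
noncomputable def ofProp {L : Language} {α : Type} {m : ℕ} (p : Prop) : L.BoundedFormula α m :=
  if p then ⊤ else ⊥

lemma realize_ofProp {L : Language} {M : Type} [L.Structure M] {α : Type} {m : ℕ}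
    (p : Prop) (v : α → M) (xs : Fin m → M) :
    (ofProp p : L.BoundedFormula α m).Realize v xs ↔ p := by
  by_cases h : p <;> simp [ofProp, h]

noncomputable def finConj {L : Language} {α : Type} {m : ℕ} :
    ∀ {k : ℕ}, (Fin k → L.BoundedFormula α m) → L.BoundedFormula α m
  | 0, _ => ⊤
  | _ + 1, f => f 0 ⊓ finConj (fun i => f i.succ)

lemma realize_finConj {L : Language} {M : Type} [L.Structure M] {α : Type} {m : ℕ} :
    ∀ {k : ℕ} (f : Fin k → L.BoundedFormula α m) (v : α → M) (xs : Fin m → M),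
      (finConj f).Realize v xs ↔ ∀ i, (f i).Realize v xs
  | 0, f, v, xs => by simp [finConj]
  | k + 1, f, v, xs => by
      simp [finConj, realize_finConj (fun i => f i.succ) v xs, Fin.forall_fin_succ,
        BoundedFormula.realize_inf]

section Elim

variable (ℓ u b : ℕ)

/-- number of unary symbols of the new language -/
abbrev nu : ℕ := u + (b * ℓ + b * ℓ)

abbrev LC := cLang ℓ (rels012 0 u b)
abbrev LR := relLang (rels012 0 (nu ℓ u b) b)

/-- constant data: truth values of relations among the hard-wired constants -/
def Dty := (Fin u → Fin ℓ → Prop) × (Fin b → Fin ℓ → Fin ℓ → Prop)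

noncomputable instance : Fintype (Dty ℓ u b) := by
  unfold Dty
  classical
  infer_instance

/-- encoding of the unary symbols of the new language -/
def eU : (Fin u ⊕ (Fin (b * ℓ) ⊕ Fin (b * ℓ))) ≃ Fin (nu ℓ u b) :=
  (Equiv.sumCongr (Equiv.refl _) finSumFinEquiv).trans finSumFinEquiv

def origU (r : Fin u) : Fin (nu ℓ u b) := eU ℓ u b (.inl r)
def uL (r : Fin b) (i : Fin ℓ) : Fin (nu ℓ u b) :=
  eU ℓ u b (.inr (.inl (finProdFinEquiv (r, i))))
def uR (r : Fin b) (i : Fin ℓ) : Fin (nu ℓ u b) :=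
  eU ℓ u b (.inr (.inr (finProdFinEquiv (r, i))))

variable {ℓ u b}

abbrev Base (u b M : ℕ) := ∀ k, rels012 0 u b k → (Fin k → Fin M) → Prop
abbrev Base' (ℓ u b M : ℕ) := ∀ k, rels012 0 (nu ℓ u b) b k → (Fin k → Fin M) → Prop

/-- reconstruct an interpretation on `Fin (N + ℓ)` from constant data and an
interpretation of the new language on `Fin N` -/
def bwd {N : ℕ} (D : Dty ℓ u b) (S' : Base' ℓ u b N) : Base u b (N + ℓ)
  | 0, r, _ => Fin.elim0 r
  | 1, r, w =>
      match finSumFinEquiv.symm (w 0) with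
      | .inl x => S' 1 (origU ℓ u b r) (fun _ => x)
      | .inr i => D.1 r i
  | 2, r, w =>
      match finSumFinEquiv.symm (w 0), finSumFinEquiv.symm (w 1) with
      | .inl x, .inl y => S' 2 r ![x, y]
      | .inl x, .inr i => S' 1 (uR ℓ u b r i) (fun _ => x)
      | .inr i, .inl y => S' 1 (uL ℓ u b r i) (fun _ => y)
      | .inr i, .inr j => D.2 r i j
  | (_ + 3), r, _ => Empty.elim r

def fwdD {N : ℕ} (S : Base u b (N + ℓ)) : Dty ℓ u b :=
  ⟨fun r i => S 1 r (fun _ => Fin.natAdd N i),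
   fun r i j => S 2 r ![Fin.natAdd N i, Fin.natAdd N j]⟩

def fwdS' {N : ℕ} (S : Base u b (N + ℓ)) : Base' ℓ u b N
  | 0, r, _ => Fin.elim0 r
  | 1, q, w =>
      match (eU ℓ u b).symm q with
      | .inl r => S 1 r (fun _ => Fin.castAdd ℓ (w 0))
      | .inr (.inl p) =>
          S 2 (finProdFinEquiv.symm p).1
            ![Fin.natAdd N (finProdFinEquiv.symm p).2, Fin.castAdd ℓ (w 0)]
      | .inr (.inr p) =>
          S 2 (finProdFinEquiv.symm p).1
            ![Fin.castAdd ℓ (w 0), Fin.natAdd N (finProdFinEquiv.symm p).2]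
  | 2, r, w => S 2 r ![Fin.castAdd ℓ (w 0), Fin.castAdd ℓ (w 1)]
  | (_ + 3), r, _ => Empty.elim r

lemma vec1_eta {γ : Type*} (w : Fin 1 → γ) : (fun _ : Fin 1 => w 0) = w := by
  funext j; fin_cases j <;> rfl

lemma vec2_eta {γ : Type*} (w : Fin 2 → γ) : ![w 0, w 1] = w := by
  funext j; fin_cases j <;> rfl

lemma bwd_fwd {N : ℕ} (S : Base u b (N + ℓ)) : bwd (fwdD S) (fwdS' S) = S := by
  funext k r w
  obtain _ | _ | _ | k := k
  · exact Fin.elim0 r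
  · rcases h : finSumFinEquiv.symm (w 0) with x | i
    · have hw : w 0 = Fin.castAdd ℓ x := by
        rw [(Equiv.symm_apply_eq _).mp h, finSumFinEquiv_apply_left]
      have hv : (fun _ : Fin 1 => Fin.castAdd ℓ x) = w := by
        rw [← vec1_eta w, hw]
      simp only [bwd, h, fwdS', origU, Equiv.symm_apply_apply, hv]
    · have hw : w 0 = Fin.natAdd N i := by
        rw [(Equiv.symm_apply_eq _).mp h, finSumFinEquiv_apply_right]
      have hv : (fun _ : Fin 1 => Fin.natAdd N i) = w := by
        rw [← vec1_eta w, hw]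
      simp only [bwd, h, fwdD, hv]
  · rcases h0 : finSumFinEquiv.symm (w 0) with x | i <;>
      rcases h1 : finSumFinEquiv.symm (w 1) with y | j
    · have hw0 : w 0 = Fin.castAdd ℓ x := by
        rw [(Equiv.symm_apply_eq _).mp h0, finSumFinEquiv_apply_left]
      have hw1 : w 1 = Fin.castAdd ℓ y := by
        rw [(Equiv.symm_apply_eq _).mp h1, finSumFinEquiv_apply_left]
      have hv : ![Fin.castAdd ℓ x, Fin.castAdd ℓ y] = w := by
        rw [← vec2_eta w, hw0, hw1]
      simp only [bwd, h0, h1, fwdS', Matrix.cons_val_zero, Matrix.cons_val_one,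
        Matrix.head_cons, hv]
    · have hw0 : w 0 = Fin.castAdd ℓ x := by
        rw [(Equiv.symm_apply_eq _).mp h0, finSumFinEquiv_apply_left]
      have hw1 : w 1 = Fin.natAdd N j := by
        rw [(Equiv.symm_apply_eq _).mp h1, finSumFinEquiv_apply_right]
      have hv : ![Fin.castAdd ℓ x, Fin.natAdd N j] = w := by
        rw [← vec2_eta w, hw0, hw1]
      simp only [bwd, h0, h1, uR, fwdS', Equiv.symm_apply_apply, Equiv.symm_apply_apply,
        Matrix.cons_val_zero, Matrix.cons_val_one, Matrix.head_cons, hv]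
    · have hw0 : w 0 = Fin.natAdd N i := by
        rw [(Equiv.symm_apply_eq _).mp h0, finSumFinEquiv_apply_right]
      have hw1 : w 1 = Fin.castAdd ℓ y := by
        rw [(Equiv.symm_apply_eq _).mp h1, finSumFinEquiv_apply_left]
      have hv : ![Fin.natAdd N i, Fin.castAdd ℓ y] = w := by
        rw [← vec2_eta w, hw0, hw1]
      simp only [bwd, h0, h1, uL, fwdS', Equiv.symm_apply_apply,
        Matrix.cons_val_zero, Matrix.cons_val_one, Matrix.head_cons, hv]
    · have hw0 : w 0 = Fin.natAdd N i := by
        rw [(Equiv.symm_apply_eq _).mp h0, finSumFinEquiv_apply_right]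
      have hw1 : w 1 = Fin.natAdd N j := by
        rw [(Equiv.symm_apply_eq _).mp h1, finSumFinEquiv_apply_right]
      have hv : ![Fin.natAdd N i, Fin.natAdd N j] = w := by
        rw [← vec2_eta w, hw0, hw1]
      simp only [bwd, h0, h1, fwdD, hv]
  · exact Empty.elim r

lemma fwd_bwd {N : ℕ} (D : Dty ℓ u b) (S' : Base' ℓ u b N) :
    (fwdD (bwd D S'), fwdS' (bwd D S')) = (D, S') := by
  refine Prod.ext ?_ ?_
  · refine Prod.ext ?_ ?_
    · funext r i
      simp [fwdD, bwd, finSumFinEquiv_symm_apply_natAdd]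
    · funext r i j
      simp [fwdD, bwd, finSumFinEquiv_symm_apply_natAdd]
  · funext k q w
    obtain _ | _ | _ | k := k
    · exact Fin.elim0 q
    · rcases h : (eU ℓ u b).symm q with r | p | p <;>
        have hq : q = _ := (Equiv.symm_apply_eq _).mp h
    
      · simp only [fwdS', h, bwd, finSumFinEquiv_symm_apply_castAdd, vec1_eta]
        rw [hq]
        rfl
      · simp only [fwdS', h, bwd, Matrix.cons_val_zero, Matrix.cons_val_one,
          Matrix.head_cons, finSumFinEquiv_symm_apply_castAdd,
          finSumFinEquiv_symm_apply_natAdd, vec1_eta, uL, Prod.mk.eta,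
          Equiv.apply_symm_apply]
        rw [hq]
        rfl
      · simp only [fwdS', h, bwd, Matrix.cons_val_zero, Matrix.cons_val_one,
          Matrix.head_cons, finSumFinEquiv_symm_apply_castAdd,
          finSumFinEquiv_symm_apply_natAdd, vec1_eta, uR, Prod.mk.eta,
          Equiv.apply_symm_apply]
        rw [hq]
        rfl
    · simp only [fwdS', bwd, Matrix.cons_val_zero, Matrix.cons_val_one, Matrix.head_cons,
        finSumFinEquiv_symm_apply_castAdd, vec2_eta]
    · exact Empty.elim q

noncomputable def baseEquiv (N : ℕ) :
    Base u b (N + ℓ) ≃ (Dty ℓ u b) × Base' ℓ u b N where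
  toFun S := (fwdD S, fwdS' S)
  invFun p := bwd p.1 p.2
  left_inv S := bwd_fwd S
  right_inv p := fwd_bwd p.1 p.2

/-! ### The syntactic translation -/

def toFull {N m : ℕ} (xs : Fin m → Fin N) : Fin m ⊕ Fin ℓ → Fin (N + ℓ) :=
  Sum.elim (fun x => Fin.castAdd ℓ (xs x)) (fun i => Fin.natAdd N i)

def tval {n m : ℕ} (σ : Fin n → Fin m ⊕ Fin ℓ) :
    (LC ℓ u b).Term (Empty ⊕ Fin n) → Fin m ⊕ Fin ℓ
  | .var (.inl e) => e.elim
  | .var (.inr j) => σ j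
  | @Term.func _ _ 0 i _ => .inr i
  | @Term.func _ _ (_ + 1) f _ => f.elim

noncomputable def trEq {m : ℕ} : Fin m ⊕ Fin ℓ → Fin m ⊕ Fin ℓ →
    (LR ℓ u b).BoundedFormula Empty m
  | .inl x, .inl y => Term.bdEqual (Term.var (.inr x)) (Term.var (.inr y))
  | .inl _, .inr _ => ⊥
  | .inr _, .inl _ => ⊥
  | .inr i, .inr j => ofProp (i = j)

noncomputable def trRel1 {m : ℕ} (D : Dty ℓ u b) (r : Fin u) :
    Fin m ⊕ Fin ℓ → (LR ℓ u b).BoundedFormula Empty m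
  | .inl x => @Relations.boundedFormula (LR ℓ u b) Empty 1 m
      (origU ℓ u b r) (fun _ => Term.var (.inr x))
  | .inr i => ofProp (D.1 r i)

noncomputable def trRel2 {m : ℕ} (D : Dty ℓ u b) (r : Fin b) :
    Fin m ⊕ Fin ℓ → Fin m ⊕ Fin ℓ → (LR ℓ u b).BoundedFormula Empty m
  | .inl x, .inl y => @Relations.boundedFormula (LR ℓ u b) Empty 2 m
      r ![Term.var (.inr x), Term.var (.inr y)]
  | .inl x, .inr i => @Relations.boundedFormula (LR ℓ u b) Empty 1 m
      (uR ℓ u b r i) (fun _ => Term.var (.inr x))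
  | .inr i, .inl y => @Relations.boundedFormula (LR ℓ u b) Empty 1 m
      (uL ℓ u b r i) (fun _ => Term.var (.inr y))
  | .inr i, .inr j => ofProp (D.2 r i j)

noncomputable def trAtom {n m : ℕ} (D : Dty ℓ u b) (σ : Fin n → Fin m ⊕ Fin ℓ) :
    ∀ {l : ℕ}, (LC ℓ u b).Relations l → (Fin l → (LC ℓ u b).Term (Empty ⊕ Fin n)) →
      (LR ℓ u b).BoundedFormula Empty m
  | 0, r, _ => Fin.elim0 r
  | 1, r, v => trRel1 D r (tval σ (v 0))
  | 2, r, v => trRel2 D r (tval σ (v 0)) (tval σ (v 1))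
  | _ + 3, r, _ => Empty.elim r

def extOrd {n m : ℕ} (σ : Fin n → Fin m ⊕ Fin ℓ) : Fin (n + 1) → Fin (m + 1) ⊕ Fin ℓ :=
  Fin.snoc (fun j => (σ j).map Fin.castSucc id) (.inl (Fin.last m))

noncomputable def trF (D : Dty ℓ u b) :
    ∀ {n : ℕ}, (LC ℓ u b).BoundedFormula Empty n →
      ∀ {m : ℕ}, (Fin n → Fin m ⊕ Fin ℓ) → (LR ℓ u b).BoundedFormula Empty m
  | _, .falsum, _, _ => ⊥
  | _, .equal t₁ t₂, _, σ => trEq (tval σ t₁) (tval σ t₂)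
  | _, .rel R ts, _, σ => trAtom D σ R ts
  | _, .imp f g, _, σ => (trF D f σ).imp (trF D g σ)
  | _, .all f, _, σ =>
      (trF D f (extOrd σ)).all ⊓ finConj (fun i => trF D f (Fin.snoc σ (.inr i)))

/-! ### Semantics of the translation -/

lemma castAdd_inj {N : ℕ} (x y : Fin N) : Fin.castAdd ℓ x = Fin.castAdd ℓ y ↔ x = y := by
  simp [Fin.ext_iff]

lemma natAdd_inj {N : ℕ} (i j : Fin ℓ) : Fin.natAdd N i = Fin.natAdd N j ↔ i = j := by
  simp [Fin.ext_iff]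

lemma castAdd_ne_natAdd {N : ℕ} (x : Fin N) (i : Fin ℓ) :
    Fin.castAdd ℓ x ≠ Fin.natAdd N i := by
  have := x.isLt
  simp only [ne_eq, Fin.ext_iff, Fin.coe_castAdd, Fin.coe_natAdd]
  omega

lemma realize_tval {N n m : ℕ} (S : Base u b (N + ℓ)) (σ : Fin n → Fin m ⊕ Fin ℓ)
    (xs : Fin m → Fin N) (t : (LC ℓ u b).Term (Empty ⊕ Fin n)) :
    @Term.realize _ _ (cLang.mkStructure (fun i => Fin.natAdd N i) S) _
      (Sum.elim Empty.elim (fun j => toFull xs (σ j))) t = toFull xs (tval σ t) := by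
  match t with
  | .var (.inl e) => exact e.elim
  | .var (.inr j) => rfl
  | @Term.func _ _ 0 i ts => rfl
  | @Term.func _ _ (k + 1) f ts => exact f.elim

lemma realize_trEq {N m : ℕ} (S' : Base' ℓ u b N) (a₁ a₂ : Fin m ⊕ Fin ℓ)
    (xs : Fin m → Fin N) :
    (@BoundedFormula.Realize (LR ℓ u b) _ (relLang.mkStructure S') _ _
      (trEq a₁ a₂) Empty.elim xs) ↔ toFull xs a₁ = toFull xs a₂ := by
  letI := relLang.mkStructure S'
  rcases a₁ with x | i <;> rcases a₂ with y | j
  · simp only [trEq, BoundedFormula.realize_bdEqual, Term.realize_var, Sum.elim_inr,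
      toFull, Sum.elim_inl]
    exact (castAdd_inj _ _).symm
  · simp only [trEq, BoundedFormula.realize_bot, toFull, Sum.elim_inl, Sum.elim_inr]
    exact iff_of_false (fun h => h) (castAdd_ne_natAdd _ _)
  · simp only [trEq, BoundedFormula.realize_bot, toFull, Sum.elim_inl, Sum.elim_inr]
    exact iff_of_false (fun h => h) (Ne.symm (castAdd_ne_natAdd _ _))
  · rw [trEq, realize_ofProp]
    simp only [toFull, Sum.elim_inr]
    exact (natAdd_inj _ _).symm

lemma realize_trRel1 {N m : ℕ} (D : Dty ℓ u b) (S' : Base' ℓ u b N) (r : Fin u)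
    (a : Fin m ⊕ Fin ℓ) (xs : Fin m → Fin N) (w : Fin 1 → Fin (N + ℓ))
    (hw : w 0 = toFull xs a) :
    (@BoundedFormula.Realize (LR ℓ u b) _ (relLang.mkStructure S') _ _
      (trRel1 D r a) Empty.elim xs) ↔ bwd D S' 1 r w := by
  letI := relLang.mkStructure S'
  rcases a with x | i
  · simp only [toFull, Sum.elim_inl] at hw
    have hb : bwd D S' 1 r w = S' 1 (origU ℓ u b r) fun _ => xs x := by
      simp only [bwd, hw, finSumFinEquiv_symm_apply_castAdd]
    rw [trRel1, hb]
    exact Iff.rfl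
  · simp only [toFull, Sum.elim_inr] at hw
    have hb : bwd D S' 1 r w = D.1 r i := by
      simp only [bwd, hw, finSumFinEquiv_symm_apply_natAdd]
    rw [trRel1, hb, realize_ofProp]

lemma realize_trRel2 {N m : ℕ} (D : Dty ℓ u b) (S' : Base' ℓ u b N) (r : Fin b)
    (a₁ a₂ : Fin m ⊕ Fin ℓ) (xs : Fin m → Fin N) (w : Fin 2 → Fin (N + ℓ))
    (hw0 : w 0 = toFull xs a₁) (hw1 : w 1 = toFull xs a₂) :
    (@BoundedFormula.Realize (LR ℓ u b) _ (relLang.mkStructure S') _ _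
      (trRel2 D r a₁ a₂) Empty.elim xs) ↔ bwd D S' 2 r w := by
  letI := relLang.mkStructure S'
  rcases a₁ with x | i <;> rcases a₂ with y | j <;>
    simp only [toFull, Sum.elim_inl, Sum.elim_inr] at hw0 hw1
  · have hv : (fun i : Fin 2 => Term.realize (L := LR ℓ u b) (M := Fin N)
        (Sum.elim Empty.elim xs) (![Term.var (Sum.inr x), Term.var (Sum.inr y)] i)) =
        ![xs x, xs y] := by
      funext i; fin_cases i <;> rfl
    have hb : bwd D S' 2 r w = S' 2 r ![xs x, xs y] := by
      simp only [bwd, hw0, hw1, finSumFinEquiv_symm_apply_castAdd]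
    rw [trRel2, hb, ← hv]
    exact Iff.rfl
  · have hb : bwd D S' 2 r w = S' 1 (uR ℓ u b r j) fun _ => xs x := by
      simp only [bwd, hw0, hw1, finSumFinEquiv_symm_apply_castAdd,
        finSumFinEquiv_symm_apply_natAdd]
    rw [trRel2, hb]
    exact Iff.rfl
  · have hb : bwd D S' 2 r w = S' 1 (uL ℓ u b r i) fun _ => xs y := by
      simp only [bwd, hw0, hw1, finSumFinEquiv_symm_apply_castAdd,
        finSumFinEquiv_symm_apply_natAdd]
    rw [trRel2, hb]
    exact Iff.rfl
  · have hb : bwd D S' 2 r w = D.2 r i j := by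
      simp only [bwd, hw0, hw1, finSumFinEquiv_symm_apply_natAdd]
    rw [trRel2, hb, realize_ofProp]

lemma toFull_extOrd {N n m : ℕ} (σ : Fin n → Fin m ⊕ Fin ℓ) (xs : Fin m → Fin N)
    (x : Fin N) :
    (fun j => toFull (Fin.snoc xs x) (extOrd σ j)) =
      Fin.snoc (fun j => toFull xs (σ j)) (Fin.castAdd ℓ x) := by
  funext j
  refine Fin.lastCases ?_ ?_ j
  · simp [extOrd, toFull]
  · intro j'
    simp only [extOrd, Fin.snoc_castSucc]
    rcases hv : σ j' with y | i
    · simp [toFull, hv]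
    · simp [toFull, hv]

lemma toFull_snocConst {N n m : ℕ} (σ : Fin n → Fin m ⊕ Fin ℓ) (xs : Fin m → Fin N)
    (i : Fin ℓ) :
    (fun j => toFull xs (@Fin.snoc n (fun _ => Fin m ⊕ Fin ℓ) σ (Sum.inr i) j)) =
      Fin.snoc (fun j => toFull xs (σ j)) (Fin.natAdd N i) := by
  funext j
  refine Fin.lastCases ?_ ?_ j
  · simp [toFull]
  · intro j'
    simp [toFull]

lemma forall_fin_add {N : ℕ} (P : Fin (N + ℓ) → Prop) :
    (∀ a, P a) ↔ (∀ x : Fin N, P (Fin.castAdd ℓ x)) ∧ (∀ i : Fin ℓ, P (Fin.natAdd N i)) :=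
  ⟨fun h => ⟨fun x => h _, fun i => h _⟩, fun h a => Fin.addCases h.1 h.2 a⟩

lemma realize_trF {N : ℕ} (D : Dty ℓ u b) (S' : Base' ℓ u b N) {n : ℕ}
    (φ : (LC ℓ u b).BoundedFormula Empty n) :
    ∀ {m : ℕ} (σ : Fin n → Fin m ⊕ Fin ℓ) (xs : Fin m → Fin N),
      (@BoundedFormula.Realize (LR ℓ u b) _ (relLang.mkStructure S') _ _
        (trF D φ σ) Empty.elim xs) ↔
      (@BoundedFormula.Realize (LC ℓ u b) _
        (cLang.mkStructure (fun i => Fin.natAdd N i) (bwd D S')) _ _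
        φ Empty.elim (fun j => toFull xs (σ j))) := by
  letI := relLang.mkStructure S'
  letI := cLang.mkStructure (fun i : Fin ℓ => Fin.natAdd N i) (bwd D S')
  induction φ with
  | falsum =>
    intro m σ xs
    simp only [trF]
    exact Iff.rfl
  | equal t₁ t₂ =>
    intro m σ xs
    simp only [trF]
    rw [show (@BoundedFormula.Realize (LC ℓ u b) _
        (cLang.mkStructure (fun i => Fin.natAdd N i) (bwd D S')) _ _
        (BoundedFormula.equal t₁ t₂) Empty.elim (fun j => toFull xs (σ j))) ↔
      (@Term.realize _ _ (cLang.mkStructure (fun i => Fin.natAdd N i) (bwd D S')) _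
        (Sum.elim Empty.elim (fun j => toFull xs (σ j))) t₁ =
       @Term.realize _ _ (cLang.mkStructure (fun i => Fin.natAdd N i) (bwd D S')) _
        (Sum.elim Empty.elim (fun j => toFull xs (σ j))) t₂) from Iff.rfl]
    rw [realize_tval, realize_tval]
    exact realize_trEq S' _ _ xs
  | rel R ts =>
    intro m σ xs
    rename_i l
    rw [show (@BoundedFormula.Realize (LC ℓ u b) _
        (cLang.mkStructure (fun i => Fin.natAdd N i) (bwd D S')) _ _
        (BoundedFormula.rel R ts) Empty.elim (fun j => toFull xs (σ j))) ↔
      bwd D S' l R (fun i => @Term.realize _ _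
        (cLang.mkStructure (fun i => Fin.natAdd N i) (bwd D S')) _
        (Sum.elim Empty.elim (fun j => toFull xs (σ j))) (ts i)) from Iff.rfl]
    match l, R, ts with
    | 0, R, _ => exact Fin.elim0 R
    | 1, R, ts =>
      exact realize_trRel1 D S' R _ xs _ (realize_tval _ σ xs (ts 0))
    | 2, R, ts =>
      exact realize_trRel2 D S' R _ _ xs _
        (realize_tval _ σ xs (ts 0)) (realize_tval _ σ xs (ts 1))
    | l + 3, R, _ => exact Empty.elim R
  | imp f g ihf ihg =>
    intro m σ xs
    simp only [trF, BoundedFormula.realize_imp]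
    exact imp_congr (ihf σ xs) (ihg σ xs)
  | all f ih =>
    intro m σ xs
    simp only [trF, BoundedFormula.realize_inf, BoundedFormula.realize_all,
      realize_finConj]
    constructor
    · rintro ⟨h1, h2⟩ a
      refine Fin.addCases (fun x => ?_) (fun i => ?_) a
      · have := (ih (extOrd σ) (Fin.snoc xs x)).mp (h1 x)
        rwa [toFull_extOrd] at this
      · have := (ih (Fin.snoc σ (Sum.inr i)) xs).mp (h2 i)
        rwa [toFull_snocConst] at this
    · intro h
      constructor
      · intro x
        refine (ih (extOrd σ) (Fin.snoc xs x)).mpr ?_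
        rw [toFull_extOrd]
        exact h _
      · intro i
        refine (ih (Fin.snoc σ (Sum.inr i)) xs).mpr ?_
        rw [toFull_snocConst]
        exact h _

/-! ### Sentence-level correspondence and counting -/

lemma sentence_iff {N : ℕ} (D : Dty ℓ u b) (S' : Base' ℓ u b N)
    (φ : (LC ℓ u b).Sentence) :
    (letI := relLang.mkStructure S';
      Fin N ⊨ (trF D φ Fin.elim0 : (LR ℓ u b).Sentence)) ↔
    (letI := cLang.mkStructure (fun i => Fin.natAdd N i) (bwd D S');
      Fin (N + ℓ) ⊨ φ) := by
  letI := relLang.mkStructure S'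
  letI := cLang.mkStructure (fun i : Fin ℓ => Fin.natAdd N i) (bwd D S')
  have h := realize_trF (N := N) D S' (n := 0) φ Fin.elim0 Fin.elim0
  unfold Sentence.Realize Formula.Realize
  convert h using 2 <;> apply Subsingleton.elim

instance finiteBase' (M : ℕ) : Finite (Base' ℓ u b M) := by
  refine Finite.of_injective (β := ((Fin (nu ℓ u b) → (Fin 1 → Fin M) → Prop) ×
    (Fin b → (Fin 2 → Fin M) → Prop)))
    (fun S => (S 1, S 2)) ?_
  intro S T h
  have h1 : S 1 = T 1 := congrArg Prod.fst h
  have h2 : S 2 = T 2 := congrArg Prod.snd h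
  funext k r w
  obtain _ | _ | _ | k := k
  · exact Fin.elim0 r
  · rw [h1]
  · rw [h2]
  · exact Empty.elim r

lemma key_count (φ : (LC ℓ u b).Sentence) (n : ℕ) :
    fCount ℓ φ n =
      ∑ D : Dty ℓ u b, spCount (trF D φ Fin.elim0 : (LR ℓ u b).Sentence) n := by
  classical
  have E1 : { S : ∀ k, rels012 0 u b k → (Fin k → Fin (n + ℓ)) → Prop //
      letI := cLang.mkStructure (fun i => Fin.natAdd n i) S; Fin (n + ℓ) ⊨ φ } ≃
      { p : Dty ℓ u b × Base' ℓ u b n //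
        letI := relLang.mkStructure p.2;
        Fin n ⊨ (trF p.1 φ Fin.elim0 : (LR ℓ u b).Sentence) } := by
    refine Equiv.subtypeEquiv (baseEquiv n) fun S => ?_
    have hP : (letI := cLang.mkStructure (fun i => Fin.natAdd n i) (bwd (fwdD S) (fwdS' S));
        Fin (n + ℓ) ⊨ φ) =
        (letI := cLang.mkStructure (fun i => Fin.natAdd n i) S; Fin (n + ℓ) ⊨ φ) := by
      rw [bwd_fwd S]
    exact ((sentence_iff (fwdD S) (fwdS' S) φ).trans (iff_of_eq hP)).symm
  have E2 : { p : Dty ℓ u b × Base' ℓ u b n //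
        letI := relLang.mkStructure p.2;
        Fin n ⊨ (trF p.1 φ Fin.elim0 : (LR ℓ u b).Sentence) } ≃
      Σ D : Dty ℓ u b, { S' : Base' ℓ u b n //
        letI := relLang.mkStructure S';
        Fin n ⊨ (trF D φ Fin.elim0 : (LR ℓ u b).Sentence) } :=
    { toFun := fun x => ⟨x.1.1, x.1.2, x.2⟩
      invFun := fun y => ⟨(y.1, y.2.1), y.2.2⟩
      left_inv := fun x => rfl
      right_inv := fun y => rfl }
  rw [fCount, Nat.card_congr (E1.trans E2)]
  haveI : ∀ D : Dty ℓ u b, Fintype { S' : Base' ℓ u b n //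
      letI := relLang.mkStructure S';
      Fin n ⊨ (trF D φ Fin.elim0 : (LR ℓ u b).Sentence) } :=
    fun D => Fintype.ofFinite _
  rw [Nat.card_eq_fintype_card, Fintype.card_sigma]
  refine Finset.sum_congr rfl fun D _ => ?_
  rw [spCount, Nat.card_eq_fintype_card]

end Elim


/-- **Elimination of hard-wired constants (many-sentence version).**
For a vocabulary τ with ℓ constant symbols, u unary and b binary relation symbols,
there are r (depending only on τ) and a relational vocabulary τ' consisting of the
b binary symbols together with u' ≥ u unary symbols and no constants, such that every
first-order sentence φ over τ admits first-order sentences ψ₁,…,ψ_r over τ' with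
f_φ(n) = Σ_{i=1}^r Sp_{ψ_i}(n) for all n (genuine equality, not merely modular). -/
theorem elimination_of_hardwired_constants (ℓ u b : ℕ) :
    ∃ (r u' : ℕ), u ≤ u' ∧
      ∀ φ : (cLang ℓ (rels012 0 u b)).Sentence,
        ∃ ψ : Fin r → (relLang (rels012 0 u' b)).Sentence,
          ∀ n : ℕ, fCount ℓ φ n = ∑ i : Fin r, spCount (ψ i) n := by
  classical
  refine ⟨Fintype.card (Dty ℓ u b), nu ℓ u b, Nat.le_add_right _ _, fun φ => ?_⟩
  have e : Dty ℓ u b ≃ Fin (Fintype.card (Dty ℓ u b)) := Fintype.equivFin _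
  refine ⟨fun i => (trF (e.symm i) φ Fin.elim0 : (LR ℓ u b).Sentence), fun n => ?_⟩
  rw [key_count φ n, ← Equiv.sum_comp e
    (fun i => spCount (trF (e.symm i) φ Fin.elim0 : (LR ℓ u b).Sentence) n)]
  refine Finset.sum_congr rfl fun D _ => ?_
  rw [Equiv.symm_apply_apply]
end

section
/- Let τ be a vocabulary consisting of constant symbols a_1,…,a_ℓ with ℓ ≥ 1, unary relation symbols U_1,…,U_{ℓ_U}, and binary relation symbols R_1,…,R_{ℓ_R}, and let φ be a first-order sentence over τ. Let τ' be the vocabulary with constant symbols a_1,…,a_{ℓ−1}, unary relation symbols U_1,…,U_{ℓ_U} together with 2ℓ_R new unary relation symbols I_1,…,I_{ℓ_R}, O_1,…,O_{ℓ_R}, and the same binary relation symbols R_1,…,R_{ℓ_R}. Then there exist r = 2^{ℓ_U + ℓ_R} first-order sentences ψ_1,…,ψ_r over τ' such that for every n ∈ ℕ one has f_φ(n) = Σ_{i=1}^r f_{ψ_i}(n). -/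
open FirstOrder Language

namespace RemoveConst
variable (ℓ u b : ℕ)

abbrev LL := cLang (ℓ + 1) (rels012 0 u b)
abbrev LL' := cLang ℓ (rels012 0 (u + 2 * b) b)

/- index helpers -/
def uIdx (j : Fin u) : Fin (u + 2 * b) := ⟨j.val, by omega⟩
def iIdx (r : Fin b) : Fin (u + 2 * b) := ⟨u + r.val, by omega⟩
def oIdx (r : Fin b) : Fin (u + 2 * b) := ⟨u + b + r.val, by omega⟩
def gU (j : Fin u) : Fin (u + b) := ⟨j.val, by omega⟩
def gR (r : Fin b) : Fin (u + b) := ⟨u + r.val, by omega⟩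

@[simp] lemma uIdx_val (j : Fin u) : (uIdx u b j).val = j.val := rfl
@[simp] lemma iIdx_val (r : Fin b) : (iIdx u b r).val = u + r.val := rfl
@[simp] lemma oIdx_val (r : Fin b) : (oIdx u b r).val = u + b + r.val := rfl
@[simp] lemma gU_val (j : Fin u) : (gU u b j).val = j.val := rfl
@[simp] lemma gR_val (r : Fin b) : (gR u b r).val = u + r.val := rfl

lemma gCases (p : Fin (u + b)) : (∃ j, p = gU u b j) ∨ (∃ r, p = gR u b r) := by
  by_cases h : p.val < u
  · exact Or.inl ⟨⟨p.val, h⟩, Fin.ext rfl⟩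
  · exact Or.inr ⟨⟨p.val - u, by omega⟩, Fin.ext (by simp <;> omega)⟩

lemma unCases (p : Fin (u + 2 * b)) :
    (∃ j, p = uIdx u b j) ∨ (∃ r, p = iIdx u b r) ∨ (∃ r, p = oIdx u b r) := by
  by_cases h : p.val < u
  · exact Or.inl ⟨⟨p.val, h⟩, Fin.ext rfl⟩
  · by_cases h2 : p.val < u + b
    · exact Or.inr (Or.inl ⟨⟨p.val - u, by omega⟩, Fin.ext (by simp <;> omega)⟩)
    · exact Or.inr (Or.inr ⟨⟨p.val - u - b, by omega⟩, Fin.ext (by simp <;> omega)⟩)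

/-- term translation: `none` means the term denotes the removed element. -/
def trTerm {k m : ℕ} (f : Fin k → Option (Fin m)) :
    (LL ℓ u b).Term (Empty ⊕ Fin k) → Option ((LL' ℓ u b).Term (Empty ⊕ Fin m))
  | .var (Sum.inl e) => e.elim
  | .var (Sum.inr i) => (f i).map (fun p => Term.var (Sum.inr p))
  | @Term.func _ _ 0 c _ =>
      if h : (c : Fin (ℓ + 1)).val < ℓ then
        some (Term.func (L := LL' ℓ u b) (l := 0) (⟨(c : Fin (ℓ+1)).val, h⟩ : Fin ℓ) Fin.elim0)
      else none
  | @Term.func _ _ (_+1) F _ => (F : Empty).elim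

/-- formula of fixed truth value -/
def ofBool {L : Language} {α : Type} {n : ℕ} (x : Bool) : L.BoundedFormula α n :=
  if x then ⊤ else ⊥

/-- formula translation -/
def trF (g : Fin (u + b) → Bool) :
    ∀ {k m : ℕ}, (Fin k → Option (Fin m)) →
      (LL ℓ u b).BoundedFormula Empty k → (LL' ℓ u b).BoundedFormula Empty m
  | _, _, _, .falsum => ⊥
  | _, _, f, .equal t₁ t₂ =>
      match trTerm ℓ u b f t₁, trTerm ℓ u b f t₂ with
      | some s₁, some s₂ => s₁.bdEqual s₂
      | some _, none => ⊥
      | none, some _ => ⊥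
      | none, none => ⊤
  | _, _, f, .imp θ₁ θ₂ => (trF g f θ₁).imp (trF g f θ₂)
  | _, _, f, .all θ =>
      (trF g (Fin.snoc f none) θ) ⊓
        (trF g (Fin.snoc (fun i => (f i).map Fin.castSucc) (some (Fin.last _))) θ).all
  | _, _, f, @BoundedFormula.rel _ _ _ 0 r _ => (r : Fin 0).elim0
  | _, _, f, @BoundedFormula.rel _ _ _ 1 r v =>
      match trTerm ℓ u b f (v 0) with
      | some s => BoundedFormula.rel (l := 1) (R := uIdx u b r) (fun _ => s)
      | none => ofBool (g (gU u b r))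
  | _, _, f, @BoundedFormula.rel _ _ _ 2 r v =>
      match trTerm ℓ u b f (v 0), trTerm ℓ u b f (v 1) with
      | some s₁, some s₂ => BoundedFormula.rel (l := 2) (R := (r : Fin b)) ![s₁, s₂]
      | some s₁, none => BoundedFormula.rel (l := 1) (R := iIdx u b r) (fun _ => s₁)
      | none, some s₂ => BoundedFormula.rel (l := 1) (R := oIdx u b r) (fun _ => s₂)
      | none, none => ofBool (g (gR u b r))
  | _, _, f, @BoundedFormula.rel _ _ _ (_+3) r _ => (r : Empty).elim

variable (n : ℕ)

/-- reconstruct an interpretation on `Fin (n+ℓ+1)` -/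
def bwd (g : Fin (u + b) → Bool)
    (S' : ∀ k, rels012 0 (u + 2 * b) b k → (Fin k → Fin (n + ℓ)) → Prop) :
    ∀ k, rels012 0 u b k → (Fin k → Fin (n + ℓ + 1)) → Prop
  | 0 => fun r _ => (r : Fin 0).elim0
  | 1 => fun j x => Fin.lastCases (g (gU u b j) = true)
      (fun y => S' 1 (uIdx u b j) (fun _ => y)) (x 0)
  | 2 => fun r x =>
      Fin.lastCases
        (Fin.lastCases (g (gR u b r) = true)
          (fun y1 => S' 1 (oIdx u b r) (fun _ => y1)) (x 1))
        (fun y0 => Fin.lastCases (S' 1 (iIdx u b r) (fun _ => y0))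
          (fun y1 => S' 2 r ![y0, y1]) (x 1))
        (x 0)
  | (_+3) => fun r _ => (r : Empty).elim

noncomputable def bitsOf
    (S : ∀ k, rels012 0 u b k → (Fin k → Fin (n + ℓ + 1)) → Prop) :
    Fin (u + b) → Bool := fun p =>
  if h : p.val < u then
    @decide (S 1 ⟨p.val, h⟩ (fun _ => Fin.last (n + ℓ))) (Classical.propDecidable _)
  else
    @decide (S 2 ⟨p.val - u, by omega⟩ (fun _ => Fin.last (n + ℓ))) (Classical.propDecidable _)

def fwd (S : ∀ k, rels012 0 u b k → (Fin k → Fin (n + ℓ + 1)) → Prop) :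
    ∀ k, rels012 0 (u + 2 * b) b k → (Fin k → Fin (n + ℓ)) → Prop
  | 0 => fun r _ => (r : Fin 0).elim0
  | 1 => fun q x =>
      if h : q.val < u then S 1 ⟨q.val, h⟩ (fun _ => (x 0).castSucc)
      else if h2 : q.val < u + b then
        S 2 ⟨q.val - u, by omega⟩ ![(x 0).castSucc, Fin.last (n + ℓ)]
      else S 2 ⟨q.val - u - b, by omega⟩ ![Fin.last (n + ℓ), (x 0).castSucc]
  | 2 => fun r x => S 2 r (fun i => (x i).castSucc)
  | (_+3) => fun r _ => (r : Empty).elim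

/- composition lemmas -/
lemma bitsOf_gU (S) (j : Fin u) :
    bitsOf ℓ u b n S (gU u b j) =
      @decide (S 1 j (fun _ => Fin.last (n + ℓ))) (Classical.propDecidable _) := by
  have h : (gU u b j).val < u := j.isLt
  simp only [bitsOf, h, dif_pos]
  congr 1

lemma bitsOf_gR (S) (r : Fin b) :
    bitsOf ℓ u b n S (gR u b r) =
      @decide (S 2 r (fun _ => Fin.last (n + ℓ))) (Classical.propDecidable _) := by
  have h : ¬ (gR u b r).val < u := by simp
  have e : (⟨(gR u b r).val - u, by omega⟩ : Fin b) = r := by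
    apply Fin.ext; show u + r.val - u = r.val; omega
  simp only [bitsOf, h, dif_neg, not_false_iff]
  congr 1
  rw [e]

lemma fwd_uIdx (S) (j : Fin u) (x : Fin 1 → Fin (n + ℓ)) :
    fwd ℓ u b n S 1 (uIdx u b j) x = S 1 j (fun _ => (x 0).castSucc) := by
  have h : (uIdx u b j).val < u := j.isLt
  simp only [fwd, h, dif_pos]
  congr 1

lemma fwd_iIdx (S) (r : Fin b) (x : Fin 1 → Fin (n + ℓ)) :
    fwd ℓ u b n S 1 (iIdx u b r) x = S 2 r ![(x 0).castSucc, Fin.last (n + ℓ)] := by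
  have h : ¬ (iIdx u b r).val < u := by simp
  have h2 : (iIdx u b r).val < u + b := by simp <;> omega
  simp only [fwd, h, h2, dif_neg, dif_pos, not_false_iff]
  congr 1
  apply Fin.ext
  show u + r.val - u = r.val
  omega

lemma fwd_oIdx (S) (r : Fin b) (x : Fin 1 → Fin (n + ℓ)) :
    fwd ℓ u b n S 1 (oIdx u b r) x = S 2 r ![Fin.last (n + ℓ), (x 0).castSucc] := by
  have h : ¬ (oIdx u b r).val < u := by simp <;> omega
  have h2 : ¬ (oIdx u b r).val < u + b := by simp <;> omega
  simp only [fwd, h, h2, dif_neg, not_false_iff]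
  congr 1
  exact Fin.ext (by simp <;> omega)

def StA (g : Fin (u + b) → Bool)
    (S' : ∀ k, rels012 0 (u + 2 * b) b k → (Fin k → Fin (n + ℓ)) → Prop) :
    (LL ℓ u b).Structure (Fin (n + (ℓ + 1))) :=
  cLang.mkStructure (fun i => Fin.natAdd n i) (bwd ℓ u b n g S')

def StB (S' : ∀ k, rels012 0 (u + 2 * b) b k → (Fin k → Fin (n + ℓ)) → Prop) :
    (LL' ℓ u b).Structure (Fin (n + ℓ)) :=
  cLang.mkStructure (fun i => Fin.natAdd n i) S'

lemma realize_ofBool {L : Language} {M : Type} [L.Structure M] {α : Type} {k : ℕ}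
    (x : Bool) (v : α → M) (xs : Fin k → M) :
    BoundedFormula.Realize (ofBool x : L.BoundedFormula α k) v xs ↔ x = true := by
  cases x <;> simp [ofBool]

lemma realize_trTerm (g : Fin (u + b) → Bool)
    (S' : ∀ k, rels012 0 (u + 2 * b) b k → (Fin k → Fin (n + ℓ)) → Prop)
    {k m : ℕ} (f : Fin k → Option (Fin m)) (xs : Fin m → Fin (n + ℓ))
    (v : Empty → Fin (n + (ℓ + 1))) (v' : Empty → Fin (n + ℓ))
    (t : (LL ℓ u b).Term (Empty ⊕ Fin k)) :
    @Term.realize _ _ (StA ℓ u b n g S') _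
        (Sum.elim v (fun j => (f j).elim (Fin.last (n + ℓ)) (fun p => (xs p).castSucc))) t
      = (trTerm ℓ u b f t).elim (Fin.last (n + ℓ))
          (fun t' => (@Term.realize _ _ (StB ℓ u b n S') _ (Sum.elim v' xs) t').castSucc) := by
  induction t with
  | var i =>
      match i with
      | Sum.inl e => exact e.elim
      | Sum.inr j =>
          simp only [Term.realize_var, trTerm, Sum.elim_inr]
          cases f j <;> rfl
  | @func l F ts ih =>
      match l, F with
      | 0, F =>
          simp only [trTerm]
          by_cases h : (F : Fin (ℓ + 1)).val < ℓ
          · rw [dif_pos h]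
            exact Fin.ext rfl
          · rw [dif_neg h]
            have : (F : Fin (ℓ + 1)).val = ℓ := by have := (F : Fin (ℓ + 1)).isLt; omega
            exact Fin.ext (by
              show n + (F : Fin (ℓ + 1)).val = n + ℓ
              omega)
      | (l + 1), F => exact (F : Empty).elim

end RemoveConst

namespace RemoveConst
variable (ℓ u b n : ℕ)

lemma fin1_eta {α : Type*} (v : Fin 1 → α) : v = fun _ => v 0 := by
  funext i; exact congrArg v (Subsingleton.elim i 0)

lemma fin2_eta {α : Type*} (v : Fin 2 → α) : v = ![v 0, v 1] := by
  funext i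
  match i with
  | 0 => rfl
  | 1 => rfl

lemma fwd_bwd (g : Fin (u + b) → Bool)
    (S' : ∀ k, rels012 0 (u + 2 * b) b k → (Fin k → Fin (n + ℓ)) → Prop) :
    fwd ℓ u b n (bwd ℓ u b n g S') = S' := by
  funext k r x
  match k with
  | 0 => exact (r : Fin 0).elim0
  | 1 =>
      show fwd ℓ u b n (bwd ℓ u b n g S') 1 r x = S' 1 r x
      rcases unCases u b r with ⟨j, rfl⟩ | ⟨r', rfl⟩ | ⟨r', rfl⟩
      · rw [fwd_uIdx]
        simp only [bwd, Fin.lastCases_castSucc]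
        exact congrArg _ (fin1_eta x).symm
      · rw [fwd_iIdx]
        simp only [bwd, Matrix.cons_val_zero, Matrix.cons_val_one, Matrix.head_cons,
          Fin.lastCases_castSucc, Fin.lastCases_last]
        exact congrArg _ (fin1_eta x).symm
      · rw [fwd_oIdx]
        simp only [bwd, Matrix.cons_val_zero, Matrix.cons_val_one, Matrix.head_cons,
          Fin.lastCases_castSucc, Fin.lastCases_last]
        exact congrArg _ (fin1_eta x).symm
  | 2 =>
      show fwd ℓ u b n (bwd ℓ u b n g S') 2 r x = S' 2 r x
      simp only [fwd, bwd, Fin.lastCases_castSucc]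
      exact congrArg _ (fin2_eta x).symm
  | (k+3) => exact (r : Empty).elim

lemma bits_bwd (g : Fin (u + b) → Bool)
    (S' : ∀ k, rels012 0 (u + 2 * b) b k → (Fin k → Fin (n + ℓ)) → Prop) :
    bitsOf ℓ u b n (bwd ℓ u b n g S') = g := by
  classical
  funext p
  rcases gCases u b p with ⟨j, rfl⟩ | ⟨r, rfl⟩
  · rw [Bool.eq_iff_iff, bitsOf_gU, decide_eq_true_eq]
    simp only [bwd, Fin.lastCases_last]
  · rw [Bool.eq_iff_iff, bitsOf_gR, decide_eq_true_eq]
    simp only [bwd, Matrix.cons_val_zero, Matrix.cons_val_one, Matrix.head_cons,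
      Fin.lastCases_last]

lemma bwd_fwd (S : ∀ k, rels012 0 u b k → (Fin k → Fin (n + ℓ + 1)) → Prop) :
    bwd ℓ u b n (bitsOf ℓ u b n S) (fwd ℓ u b n S) = S := by
  classical
  funext k r x
  match k with
  | 0 => exact (r : Fin 0).elim0
  | 1 =>
      show bwd ℓ u b n (bitsOf ℓ u b n S) (fwd ℓ u b n S) 1 r x = S 1 r x
      rw [fin1_eta x]
      simp only [bwd]
      induction x 0 using Fin.lastCases with
      | last =>
          rw [Fin.lastCases_last, eq_iff_iff, bitsOf_gU ℓ u b n S r, decide_eq_true_eq]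
      | cast y =>
          rw [Fin.lastCases_castSucc, fwd_uIdx ℓ u b n S r (fun _ => y)]
  | 2 =>
      show bwd ℓ u b n (bitsOf ℓ u b n S) (fwd ℓ u b n S) 2 r x = S 2 r x
      rw [fin2_eta x]
      simp only [bwd, Matrix.cons_val_zero, Matrix.cons_val_one, Matrix.head_cons]
      induction x 0 using Fin.lastCases with
      | last =>
          rw [Fin.lastCases_last]
          induction x 1 using Fin.lastCases with
          | last =>
              rw [Fin.lastCases_last, eq_iff_iff, bitsOf_gR ℓ u b n S r, decide_eq_true_eq]
              rw [show (fun _ : Fin 2 => Fin.last (n+ℓ)) = ![Fin.last (n+ℓ), Fin.last (n+ℓ)] from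
                fin2_eta _]
          | cast y1 =>
              rw [Fin.lastCases_castSucc, fwd_oIdx ℓ u b n S r (fun _ => y1)]
      | cast y0 =>
          rw [Fin.lastCases_castSucc]
          induction x 1 using Fin.lastCases with
          | last =>
              rw [Fin.lastCases_last, fwd_iIdx ℓ u b n S r (fun _ => y0)]
          | cast y1 =>
              rw [Fin.lastCases_castSucc]
              simp only [fwd]
              congr 1
              funext i
              match i with
              | 0 => rfl
              | 1 => rfl
  | (k+3) => exact (r : Empty).elim

end RemoveConst

namespace RemoveConst
variable (ℓ u b n : ℕ)

lemma realize_tr (g : Fin (u + b) → Bool)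
    (S' : ∀ k, rels012 0 (u + 2 * b) b k → (Fin k → Fin (n + ℓ)) → Prop) :
    ∀ {k : ℕ} (θ : (LL ℓ u b).BoundedFormula Empty k) {m : ℕ}
      (f : Fin k → Option (Fin m)) (xs : Fin m → Fin (n + ℓ))
      (v : Empty → Fin (n + (ℓ + 1))) (v' : Empty → Fin (n + ℓ)),
      (@BoundedFormula.Realize _ _ (StA ℓ u b n g S') _ _ θ v
        (fun j => (f j).elim (Fin.last (n + ℓ)) (fun p => (xs p).castSucc)))
      ↔ @BoundedFormula.Realize _ _ (StB ℓ u b n S') _ _ (trF ℓ u b g f θ) v' xs := by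
  intro k θ
  induction θ with
  | falsum =>
      intro m f xs v v'
      simp [trF, BoundedFormula.Realize]
  | equal t₁ t₂ =>
      intro m f xs v v'
      have e1 := realize_trTerm ℓ u b n g S' f xs v v' t₁
      have e2 := realize_trTerm ℓ u b n g S' f xs v v' t₂
      simp only [trF]
      rcases h1 : trTerm ℓ u b f t₁ with _ | s₁ <;>
        rcases h2 : trTerm ℓ u b f t₂ with _ | s₂ <;>
        rw [h1] at e1 <;> rw [h2] at e2 <;>
        simp only [Option.elim_none, Option.elim_some] at e1 e2
      · simp only [BoundedFormula.Realize, e1, e2]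
        simp
      · simp only [BoundedFormula.Realize, e1, e2]
        simp [(Fin.castSucc_lt_last _).ne']
      · simp only [BoundedFormula.Realize, e1, e2]
        simp [(Fin.castSucc_lt_last _).ne]
      · simp only [BoundedFormula.Realize, e1, e2, Term.bdEqual]
        simp [Fin.castSucc_inj]
  | @rel _ l R ts =>
      intro m f xs v v'
      match l, R with
      | 0, R => exact (R : Fin 0).elim0
      | 1, R =>
          have e0 := realize_trTerm ℓ u b n g S' f xs v v' (ts 0)
          simp only [trF]
          rcases h0 : trTerm ℓ u b f (ts 0) with _ | s <;> rw [h0] at e0 <;>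
            simp only [Option.elim_none, Option.elim_some] at e0
          · simp only [BoundedFormula.Realize]
            change bwd ℓ u b n g S' 1 R _ ↔ _
            simp only [BoundedFormula.Realize, StA, cLang.mkStructure, bwd, e0,
              Fin.lastCases_last, realize_ofBool]
          · simp only [BoundedFormula.Realize]
            change bwd ℓ u b n g S' 1 R _ ↔ S' 1 (uIdx u b R) _
            simp only [BoundedFormula.Realize, StA, StB, cLang.mkStructure, bwd, e0,
              Fin.lastCases_castSucc]
      | 2, R =>
          have e0 := realize_trTerm ℓ u b n g S' f xs v v' (ts 0)
          have e1 := realize_trTerm ℓ u b n g S' f xs v v' (ts 1)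
          simp only [trF]
          rcases h0 : trTerm ℓ u b f (ts 0) with _ | s₀ <;>
            rcases h1 : trTerm ℓ u b f (ts 1) with _ | s₁ <;>
            rw [h0] at e0 <;> rw [h1] at e1 <;> simp only [Option.elim_none, Option.elim_some] at e0 e1
          · simp only [BoundedFormula.Realize]
            change bwd ℓ u b n g S' 2 R _ ↔ _
            simp only [BoundedFormula.Realize, StA, cLang.mkStructure, bwd, e0, e1,
              Fin.lastCases_last, realize_ofBool]
          · simp only [BoundedFormula.Realize]
            change bwd ℓ u b n g S' 2 R _ ↔ S' 1 (oIdx u b R) _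
            simp only [BoundedFormula.Realize, StA, StB, cLang.mkStructure, bwd, e0, e1,
              Fin.lastCases_last, Fin.lastCases_castSucc]
          · simp only [BoundedFormula.Realize]
            change bwd ℓ u b n g S' 2 R _ ↔ S' 1 (iIdx u b R) _
            simp only [BoundedFormula.Realize, StA, StB, cLang.mkStructure, bwd, e0, e1,
              Fin.lastCases_last, Fin.lastCases_castSucc]
          · simp only [BoundedFormula.Realize]
            change bwd ℓ u b n g S' 2 R _ ↔ S' 2 R _
            simp only [BoundedFormula.Realize, StA, StB, cLang.mkStructure, bwd, e0, e1,
              Fin.lastCases_castSucc]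
            have hv : (fun i => @Term.realize _ _ (StB ℓ u b n S') _ (Sum.elim v' xs) (![s₀, s₁] i))
                = ![@Term.realize _ _ (StB ℓ u b n S') _ (Sum.elim v' xs) s₀,
                    @Term.realize _ _ (StB ℓ u b n S') _ (Sum.elim v' xs) s₁] := by
              funext i
              match i with
              | 0 => rfl
              | 1 => rfl
            rw [hv]
      | (l + 3), R => exact (R : Empty).elim
  | imp θ₁ θ₂ ih₁ ih₂ =>
      intro m f xs v v'
      simp only [trF, BoundedFormula.Realize]
      exact imp_congr (ih₁ f xs v v') (ih₂ f xs v v')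
  | @all k θ ih =>
      intro m f xs v v'
      have eq1 : Fin.snoc (fun j => (f j).elim (Fin.last (n + ℓ)) (fun p => (xs p).castSucc))
          (Fin.last (n + ℓ) : Fin (n + ℓ + 1))
          = fun j => ((Fin.snoc f none : Fin (k+1) → Option (Fin m)) j).elim (Fin.last (n + ℓ))
              (fun p => (xs p).castSucc) := by
        funext j
        induction j using Fin.lastCases with
        | last => simp
        | cast j0 => simp [Fin.snoc_castSucc]
      have eq2 : ∀ y : Fin (n + ℓ),
          Fin.snoc (fun j => (f j).elim (Fin.last (n + ℓ)) (fun p => (xs p).castSucc))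
            (y.castSucc : Fin (n + ℓ + 1))
          = fun j => ((Fin.snoc (fun i => (f i).map Fin.castSucc) (some (Fin.last m)) :
              Fin (k+1) → Option (Fin (m+1))) j).elim (Fin.last (n + ℓ))
              (fun p => ((Fin.snoc xs y : Fin (m+1) → Fin (n + ℓ)) p).castSucc) := by
        intro y
        funext j
        induction j using Fin.lastCases with
        | last => simp
        | cast j0 =>
            simp only [Fin.snoc_castSucc]
            cases h : f j0 with
            | none => simp
            | some p => simp [Fin.snoc_castSucc]
      constructor
      · intro h
        simp only [trF, BoundedFormula.realize_inf, BoundedFormula.realize_all]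
        constructor
        · refine (ih (Fin.snoc f none) xs v v').mp ?_
          have h1 := h (Fin.last (n + ℓ))
          rwa [eq1] at h1
        · intro y
          refine (ih _ (Fin.snoc xs y) v v').mp ?_
          have h2 := h (y.castSucc)
          rwa [eq2 y] at h2
      · intro h a
        simp only [trF, BoundedFormula.realize_inf, BoundedFormula.realize_all] at h
        induction a using Fin.lastCases with
        | last =>
            have h1 := (ih (Fin.snoc f none) xs v v').mpr h.1
            rw [← eq1] at h1
            exact h1
        | cast y =>
            have h2 := (ih _ (Fin.snoc xs y) v v').mpr (h.2 y)
            rw [← eq2 y] at h2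
            exact h2

end RemoveConst

namespace RemoveConst
variable (ℓ u b n : ℕ)

def Psi (g : Fin (u + b) → Bool) (φ : (LL ℓ u b).Sentence) : (LL' ℓ u b).Sentence :=
  trF ℓ u b g (fun _ : Fin 0 => (none : Option (Fin 0))) φ

lemma sat_iff (g : Fin (u + b) → Bool)
    (S' : ∀ k, rels012 0 (u + 2 * b) b k → (Fin k → Fin (n + ℓ)) → Prop)
    (φ : (LL ℓ u b).Sentence) :
    @Sentence.Realize _ (Fin (n + (ℓ + 1))) (StA ℓ u b n g S') φ
      ↔ @Sentence.Realize _ (Fin (n + ℓ)) (StB ℓ u b n S') (Psi ℓ u b g φ) := by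
  have h := realize_tr ℓ u b n g S' φ (fun _ : Fin 0 => (none : Option (Fin 0)))
    default default default
  have e : (fun j : Fin 0 => ((fun _ : Fin 0 => (none : Option (Fin 0))) j).elim
      (Fin.last (n + ℓ)) (fun p => ((default : Fin 0 → Fin (n + ℓ)) p).castSucc))
      = (default : Fin 0 → Fin (n + (ℓ + 1))) := by
    funext j; exact j.elim0
  rw [e] at h
  unfold Sentence.Realize Formula.Realize
  convert h using 3
  rfl

lemma finite_interp (u' b' m : ℕ) :
    Finite (∀ k, rels012 0 u' b' k → (Fin k → Fin m) → Prop) := by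
  classical
  let F : (∀ k, rels012 0 u' b' k → (Fin k → Fin m) → Prop) →
      ((Fin u' → (Fin 1 → Fin m) → Prop) × (Fin b' → (Fin 2 → Fin m) → Prop)) :=
    fun S => (S 1, S 2)
  have hinj : Function.Injective F := by
    intro S T h
    have h1 : S 1 = T 1 := congrArg Prod.fst h
    have h2 : S 2 = T 2 := congrArg Prod.snd h
    funext k r x
    match k with
    | 0 => exact (r : Fin 0).elim0
    | 1 => exact congrFun (congrFun h1 r) x
    | 2 => exact congrFun (congrFun h2 r) x
    | (k+3) => exact (r : Empty).elim
  exact Finite.of_injective F hinj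

lemma my_card_sigma {ι : Type} [Fintype ι] (β : ι → Type) [∀ i, Finite (β i)] :
    Nat.card (Σ i, β i) = ∑ i, Nat.card (β i) := by
  letI : ∀ i, Fintype (β i) := fun i => Fintype.ofFinite (β i)
  rw [Nat.card_eq_fintype_card, Fintype.card_sigma]
  exact Finset.sum_congr rfl (fun i _ => by rw [Nat.card_eq_fintype_card])

noncomputable def myEquiv (φ : (LL ℓ u b).Sentence) :
    { S : ∀ k, rels012 0 u b k → (Fin k → Fin (n + (ℓ + 1))) → Prop //
        @Sentence.Realize _ _ (cLang.mkStructure (fun i => Fin.natAdd n i) S) φ }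
      ≃ Σ g : Fin (u + b) → Bool,
        { S' : ∀ k, rels012 0 (u + 2 * b) b k → (Fin k → Fin (n + ℓ)) → Prop //
          @Sentence.Realize _ _ (cLang.mkStructure (fun i => Fin.natAdd n i) S')
            (Psi ℓ u b g φ) } where
  toFun := fun ⟨S, hS⟩ => ⟨bitsOf ℓ u b n S, fwd ℓ u b n S, by
    refine (sat_iff ℓ u b n (bitsOf ℓ u b n S) (fwd ℓ u b n S) φ).mp ?_
    show @Sentence.Realize _ _
      (cLang.mkStructure (fun i => Fin.natAdd n i)
        (bwd ℓ u b n (bitsOf ℓ u b n S) (fwd ℓ u b n S))) φ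
    rw [bwd_fwd]
    exact hS⟩
  invFun := fun ⟨g, S', hS'⟩ => ⟨bwd ℓ u b n g S',
    (sat_iff ℓ u b n g S' φ).mpr hS'⟩
  left_inv := fun ⟨S, hS⟩ => Subtype.ext (bwd_fwd ℓ u b n S)
  right_inv := fun ⟨g, S', hS'⟩ => by
    have h1 : bitsOf ℓ u b n (bwd ℓ u b n g S') = g := bits_bwd ℓ u b n g S'
    have h2 : fwd ℓ u b n (bwd ℓ u b n g S') = S' := fwd_bwd ℓ u b n g S'
    refine Sigma.ext h1 ?_
    refine (Subtype.heq_iff_coe_eq ?_).mpr h2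
    intro x
    dsimp only
    rw [h1]

lemma fCount_eq_sum (φ : (LL ℓ u b).Sentence) :
    fCount (ℓ + 1) φ n = ∑ g : Fin (u + b) → Bool, fCount ℓ (Psi ℓ u b g φ) n := by
  classical
  haveI := finite_interp (u + 2 * b) b (n + ℓ)
  haveI : ∀ g : Fin (u + b) → Bool,
      Finite { S' : ∀ k, rels012 0 (u + 2 * b) b k → (Fin k → Fin (n + ℓ)) → Prop //
        @Sentence.Realize _ _ (cLang.mkStructure (fun i => Fin.natAdd n i) S')
          (Psi ℓ u b g φ) } := fun g => Subtype.finite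
  calc fCount (ℓ + 1) φ n
      = Nat.card (Σ g : Fin (u + b) → Bool,
          { S' : ∀ k, rels012 0 (u + 2 * b) b k → (Fin k → Fin (n + ℓ)) → Prop //
            @Sentence.Realize _ _ (cLang.mkStructure (fun i => Fin.natAdd n i) S')
              (Psi ℓ u b g φ) }) := Nat.card_congr (myEquiv ℓ u b n φ)
    _ = ∑ g : Fin (u + b) → Bool, fCount ℓ (Psi ℓ u b g φ) n := my_card_sigma _

end RemoveConst

/-- **Removing a single hard-wired constant.**
Let τ have ℓ+1 constant symbols, u unary and b binary relation symbols, and let φ be a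
first-order sentence over τ.  Let τ' have the constant symbols a₁,…,a_ℓ, the u original
unary symbols together with 2b new unary symbols (the I's and the O's), and the same b
binary symbols.  Then there are r = 2^(u+b) first-order sentences ψ₁,…,ψ_r over τ' with
f_φ(n) = Σ_{i=1}^r f_{ψ_i}(n) for all n. -/
theorem remove_single_constant (ℓ u b : ℕ)
    (φ : (cLang (ℓ + 1) (rels012 0 u b)).Sentence) :
    ∃ ψ : Fin (2 ^ (u + b)) → (cLang ℓ (rels012 0 (u + 2 * b) b)).Sentence,
      ∀ n : ℕ, fCount (ℓ + 1) φ n = ∑ i : Fin (2 ^ (u + b)), fCount ℓ (ψ i) n := by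
  classical
  let e : Fin (2 ^ (u + b)) ≃ (Fin (u + b) → Bool) :=
    (Fintype.equivFinOfCardEq (by simp)).symm
  refine ⟨fun i => RemoveConst.Psi ℓ u b (e i) φ, fun n => ?_⟩
  rw [RemoveConst.fCount_eq_sum ℓ u b n φ]
  exact (Equiv.sum_comp e (fun g => fCount ℓ (RemoveConst.Psi ℓ u b g φ) n)).symm
end

section
/- Let τ be a vocabulary consisting of finitely many constant symbols a_1,…,a_ℓ, finitely many nullary (arity-0) relation symbols Z̄, finitely many unary relation symbols Ū, and finitely many binary relation symbols R̄, and let φ be a first-order sentence over τ. Then there exists a vocabulary τ' with no constant symbols, consisting of a finite set of nullary relation symbols Z̄' containing Z̄, a finite set of unary relation symbols Ū' containing Ū, and the same binary relation symbols R̄, and a single first-order sentence φ' over τ', such that f_φ(n) = Sp_{φ'}(n) for all n ∈ ℕ. -/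
open FirstOrder Language

namespace ManyOne

open Fin

/-- Number of new nullary symbols. -/
def zN (ℓ z u b : ℕ) : ℕ := z + (u * ℓ + b * (ℓ * ℓ))
/-- Number of new unary symbols. -/
def uN (ℓ z u b : ℕ) : ℕ := u + (b * ℓ + b * ℓ)

variable {ℓ z u b : ℕ}

/-- old nullary symbol as new nullary symbol -/
def zz (r : Fin z) : Fin (zN ℓ z u b) := Fin.castAdd _ r
/-- "U_j(a_i)" as new nullary symbol -/
def zU (j : Fin u) (i : Fin ℓ) : Fin (zN ℓ z u b) :=
  Fin.natAdd z (Fin.castAdd (b * (ℓ * ℓ)) (finProdFinEquiv (j, i)))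
/-- "R_j(a_i, a_i')" as new nullary symbol -/
def zB (j : Fin b) (i i' : Fin ℓ) : Fin (zN ℓ z u b) :=
  Fin.natAdd z (Fin.natAdd (u * ℓ) (finProdFinEquiv (j, finProdFinEquiv (i, i'))))
/-- old unary symbol as new unary symbol -/
def uu (r : Fin u) : Fin (uN ℓ z u b) := Fin.castAdd _ r
/-- "R_j(a_i, x)" as new unary symbol -/
def uL (j : Fin b) (i : Fin ℓ) : Fin (uN ℓ z u b) :=
  Fin.natAdd u (Fin.castAdd (b * ℓ) (finProdFinEquiv (j, i)))
/-- "R_j(x, a_i)" as new unary symbol -/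
def uR (j : Fin b) (i : Fin ℓ) : Fin (uN ℓ z u b) :=
  Fin.natAdd u (Fin.natAdd (b * ℓ) (finProdFinEquiv (j, i)))

variable {n : ℕ}

/-- Forward data translation. -/
def F (S : ∀ k, rels012 z u b k → (Fin k → Fin (n + ℓ)) → Prop) :
    ∀ k, rels012 (zN ℓ z u b) (uN ℓ z u b) b k → (Fin k → Fin n) → Prop
  | 0, s, _ =>
    Fin.addCases (motive := fun _ => Prop)
      (fun r => S 0 r Fin.elim0)
      (Fin.addCases (motive := fun _ => Prop)
        (fun p => S 1 (finProdFinEquiv.symm p).1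
          (fun _ => Fin.natAdd n (finProdFinEquiv.symm p).2))
        (fun q => S 2 (finProdFinEquiv.symm q).1
          ![Fin.natAdd n (finProdFinEquiv.symm (finProdFinEquiv.symm q).2).1,
            Fin.natAdd n (finProdFinEquiv.symm (finProdFinEquiv.symm q).2).2])) s
  | 1, s, v =>
    Fin.addCases (motive := fun _ => Prop)
      (fun r => S 1 r (fun x => Fin.castAdd ℓ (v x)))
      (Fin.addCases (motive := fun _ => Prop)
        (fun p => S 2 (finProdFinEquiv.symm p).1
          ![Fin.natAdd n (finProdFinEquiv.symm p).2, Fin.castAdd ℓ (v 0)])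
        (fun p => S 2 (finProdFinEquiv.symm p).1
          ![Fin.castAdd ℓ (v 0), Fin.natAdd n (finProdFinEquiv.symm p).2])) s
  | 2, s, v => S 2 s (fun x => Fin.castAdd ℓ (v x))
  | (_ + 3), s, _ => nomatch s

/-- Backward data translation. -/
def G (S' : ∀ k, rels012 (zN ℓ z u b) (uN ℓ z u b) b k → (Fin k → Fin n) → Prop) :
    ∀ k, rels012 z u b k → (Fin k → Fin (n + ℓ)) → Prop
  | 0, r, _ => S' 0 (zz r) Fin.elim0
  | 1, r, v =>
    Fin.addCases (motive := fun _ => Prop)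
      (fun y => S' 1 (uu r) ![y])
      (fun i => S' 0 (zU r i) Fin.elim0) (v 0)
  | 2, r, v =>
    Fin.addCases (motive := fun _ => Prop)
      (fun y0 => Fin.addCases (motive := fun _ => Prop)
        (fun y1 => S' 2 r ![y0, y1])
        (fun i1 => S' 1 (uR r i1) ![y0]) (v 1))
      (fun i0 => Fin.addCases (motive := fun _ => Prop)
        (fun y1 => S' 1 (uL r i0) ![y1])
        (fun i1 => S' 0 (zB r i0 i1) Fin.elim0) (v 1)) (v 0)
  | (_ + 3), r, _ => nomatch r

lemma fin_add_cases (x : Fin (n + ℓ)) :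
    (∃ y, x = Fin.castAdd ℓ y) ∨ (∃ i, x = Fin.natAdd n i) := by
  induction x using Fin.addCases with
  | left y => exact Or.inl ⟨y, rfl⟩
  | right i => exact Or.inr ⟨i, rfl⟩

lemma fun0_eq {X : Type*} (f g : Fin 0 → X) : f = g := funext fun x => x.elim0

lemma fun1_eq {X : Type*} (f : Fin 1 → X) : f = ![f 0] := by
  funext x; fin_cases x <;> rfl

lemma fun2_eq {X : Type*} (f : Fin 2 → X) : f = ![f 0, f 1] := by
  funext x; fin_cases x <;> rfl

section Flemmas

variable (S : ∀ k, rels012 z u b k → (Fin k → Fin (n + ℓ)) → Prop)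

@[simp] lemma F_zz (r : Fin z) (v : Fin 0 → Fin n) :
    F S 0 (zz r) v = S 0 r Fin.elim0 := by
  simp only [F, zz, Fin.addCases_left]

@[simp] lemma F_zU (j : Fin u) (i : Fin ℓ) (v : Fin 0 → Fin n) :
    F S 0 (zU j i) v = S 1 j (fun _ => Fin.natAdd n i) := by
  simp only [F, zU, Fin.addCases_right, Fin.addCases_left, Equiv.symm_apply_apply]

@[simp] lemma F_zB (j : Fin b) (i i' : Fin ℓ) (v : Fin 0 → Fin n) :
    F S 0 (zB j i i') v = S 2 j ![Fin.natAdd n i, Fin.natAdd n i'] := by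
  simp only [F, zB, Fin.addCases_right, Fin.addCases_left, Equiv.symm_apply_apply]

@[simp] lemma F_uu (r : Fin u) (v : Fin 1 → Fin n) :
    F S 1 (uu r) v = S 1 r (fun x => Fin.castAdd ℓ (v x)) := by
  simp only [F, uu, Fin.addCases_left]

@[simp] lemma F_uL (j : Fin b) (i : Fin ℓ) (v : Fin 1 → Fin n) :
    F S 1 (uL j i) v = S 2 j ![Fin.natAdd n i, Fin.castAdd ℓ (v 0)] := by
  simp only [F, uL, Fin.addCases_right, Fin.addCases_left, Equiv.symm_apply_apply]

@[simp] lemma F_uR (j : Fin b) (i : Fin ℓ) (v : Fin 1 → Fin n) :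
    F S 1 (uR j i) v = S 2 j ![Fin.castAdd ℓ (v 0), Fin.natAdd n i] := by
  simp only [F, uR, Fin.addCases_right, Fin.addCases_left, Equiv.symm_apply_apply]

@[simp] lemma F_2 (r : Fin b) (v : Fin 2 → Fin n) :
    F S 2 r v = S 2 r (fun x => Fin.castAdd ℓ (v x)) := rfl

end Flemmas

section Glemmas

variable (S' : ∀ k, rels012 (zN ℓ z u b) (uN ℓ z u b) b k → (Fin k → Fin n) → Prop)

lemma G_0 (r : Fin z) (v : Fin 0 → Fin (n + ℓ)) :
    G S' 0 r v = S' 0 (zz r) Fin.elim0 := rfl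

lemma G_1_cast (r : Fin u) (v : Fin 1 → Fin (n + ℓ)) (y : Fin n)
    (h : v 0 = Fin.castAdd ℓ y) : G S' 1 r v = S' 1 (uu r) ![y] := by
  simp [G, h]

lemma G_1_nat (r : Fin u) (v : Fin 1 → Fin (n + ℓ)) (i : Fin ℓ)
    (h : v 0 = Fin.natAdd n i) : G S' 1 r v = S' 0 (zU r i) Fin.elim0 := by
  simp [G, h]

lemma G_2_cc (r : Fin b) (v : Fin 2 → Fin (n + ℓ)) (y0 y1 : Fin n)
    (h0 : v 0 = Fin.castAdd ℓ y0) (h1 : v 1 = Fin.castAdd ℓ y1) :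
    G S' 2 r v = S' 2 r ![y0, y1] := by
  simp [G, h0, h1]

lemma G_2_cn (r : Fin b) (v : Fin 2 → Fin (n + ℓ)) (y0 : Fin n) (i1 : Fin ℓ)
    (h0 : v 0 = Fin.castAdd ℓ y0) (h1 : v 1 = Fin.natAdd n i1) :
    G S' 2 r v = S' 1 (uR r i1) ![y0] := by
  simp [G, h0, h1]

lemma G_2_nc (r : Fin b) (v : Fin 2 → Fin (n + ℓ)) (i0 : Fin ℓ) (y1 : Fin n)
    (h0 : v 0 = Fin.natAdd n i0) (h1 : v 1 = Fin.castAdd ℓ y1) :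
    G S' 2 r v = S' 1 (uL r i0) ![y1] := by
  simp [G, h0, h1]

lemma G_2_nn (r : Fin b) (v : Fin 2 → Fin (n + ℓ)) (i0 i1 : Fin ℓ)
    (h0 : v 0 = Fin.natAdd n i0) (h1 : v 1 = Fin.natAdd n i1) :
    G S' 2 r v = S' 0 (zB r i0 i1) Fin.elim0 := by
  simp [G, h0, h1]

end Glemmas

/-- The data equivalence. -/
def E : (∀ k, rels012 z u b k → (Fin k → Fin (n + ℓ)) → Prop) ≃
    (∀ k, rels012 (zN ℓ z u b) (uN ℓ z u b) b k → (Fin k → Fin n) → Prop) where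
  toFun := F
  invFun := G
  left_inv := by
    intro S
    funext k r v
    match k with
    | 0 => rw [G_0 _ r, F_zz _ r]; exact congrArg _ (fun0_eq _ _)
    | 1 =>
      rcases fin_add_cases (v 0) with ⟨y, hy⟩ | ⟨i, hi⟩
      · rw [G_1_cast _ r _ _ hy, F_uu _ r]
        congr 1
        rw [fun1_eq v, hy]; try (funext x; fin_cases x <;> rfl)
      · rw [G_1_nat _ r _ _ hi, F_zU _ r]
        congr 1
        rw [fun1_eq v, hi]; try (funext x; fin_cases x <;> rfl)
    | 2 =>
      rcases fin_add_cases (v 0) with ⟨y0, h0⟩ | ⟨i0, h0⟩ <;>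
        rcases fin_add_cases (v 1) with ⟨y1, h1⟩ | ⟨i1, h1⟩
      · rw [G_2_cc _ r _ _ _ h0 h1, F_2 _ r]
        congr 1; rw [fun2_eq v, h0, h1]; try (funext x; fin_cases x <;> rfl)
      · rw [G_2_cn _ r _ _ _ h0 h1, F_uR _ r]
        congr 1; rw [fun2_eq v, h0, h1]; try (funext x; fin_cases x <;> rfl)
      · rw [G_2_nc _ r _ _ _ h0 h1, F_uL _ r]
        congr 1; rw [fun2_eq v, h0, h1]; try (funext x; fin_cases x <;> rfl)
      · rw [G_2_nn _ r _ _ _ h0 h1, F_zB _ r]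
        congr 1; rw [fun2_eq v, h0, h1]; try (funext x; fin_cases x <;> rfl)
    | (k + 3) => exact (r : Empty).elim
  right_inv := by
    intro S'
    funext k s v
    match k with
    | 0 =>
      induction s using Fin.addCases with
      | left r =>
        rw [show Fin.castAdd _ r = zz (ℓ := ℓ) (u := u) (b := b) r from rfl, F_zz, G_0]
        exact congrArg _ (fun0_eq _ _)
      | right s2 =>
        induction s2 using Fin.addCases with
        | left p =>
          obtain ⟨⟨j, i⟩, rfl⟩ := finProdFinEquiv.surjective p
          rw [show Fin.natAdd z (Fin.castAdd _ (finProdFinEquiv (j, i))) = zU j i from rfl,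
            F_zU, G_1_nat _ _ _ i rfl]
          exact congrArg _ (fun0_eq _ _)
        | right q =>
          obtain ⟨⟨j, q2⟩, rfl⟩ := finProdFinEquiv.surjective q
          obtain ⟨⟨i, i'⟩, rfl⟩ := finProdFinEquiv.surjective q2
          rw [show Fin.natAdd z (Fin.natAdd _ (finProdFinEquiv (j, finProdFinEquiv (i, i')))) =
            zB j i i' from rfl, F_zB, G_2_nn _ _ _ i i' rfl rfl]
          exact congrArg _ (fun0_eq _ _)
    | 1 =>
      induction s using Fin.addCases with
      | left r =>
        rw [show Fin.castAdd _ r = uu (ℓ := ℓ) (z := z) (b := b) r from rfl, F_uu,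
          G_1_cast _ _ _ (v 0) rfl]
        congr 1; try (funext x; fin_cases x <;> rfl)
      | right s2 =>
        induction s2 using Fin.addCases with
        | left p =>
          obtain ⟨⟨j, i⟩, rfl⟩ := finProdFinEquiv.surjective p
          rw [show Fin.natAdd u (Fin.castAdd _ (finProdFinEquiv (j, i))) = uL j i from rfl,
            F_uL, G_2_nc _ _ _ i (v 0) rfl rfl]
          congr 1; try (funext x; fin_cases x <;> rfl)
        | right q =>
          obtain ⟨⟨j, i⟩, rfl⟩ := finProdFinEquiv.surjective q
          rw [show Fin.natAdd u (Fin.natAdd _ (finProdFinEquiv (j, i))) = uR j i from rfl,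
            F_uR, G_2_cn _ _ _ (v 0) i rfl rfl]
          congr 1; try (funext x; fin_cases x <;> rfl)
    | 2 =>
      rw [F_2 _ s, G_2_cc _ s (fun x => Fin.castAdd ℓ (v x)) (v 0) (v 1) rfl rfl]
      congr 1; try (funext x; fin_cases x <;> rfl)
    | (k + 3) => exact (s : Empty).elim

end ManyOne

namespace ManyOne

variable {ℓ z u b : ℕ}

/-- Classify a term as a constant or a (free) variable. -/
def cls {m : ℕ} (σ : Fin m → Option (Fin ℓ)) :
    (cLang ℓ (rels012 z u b)).Term (Empty ⊕ Fin m) → Fin ℓ ⊕ {j : Fin m // σ j = none}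
  | .var (Sum.inl e) => e.elim
  | .var (Sum.inr j) =>
    match h : σ j with
    | some i => Sum.inl i
    | none => Sum.inr ⟨j, h⟩
  | @Term.func _ _ 0 c _ => Sum.inl c
  | @Term.func _ _ (_ + 1) f _ => nomatch f

/-- Translation of an equality atom. -/
def eqF {γ : Type} :
    (Fin ℓ ⊕ γ) → (Fin ℓ ⊕ γ) → (relLang (rels012 (zN ℓ z u b) (uN ℓ z u b) b)).Formula γ
  | Sum.inl i, Sum.inl i' => if i = i' then ⊤ else ⊥
  | Sum.inl _, Sum.inr _ => ⊥
  | Sum.inr _, Sum.inl _ => ⊥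
  | Sum.inr j, Sum.inr j' => Term.equal (Term.var j) (Term.var j')

/-- Translation of a relational atom. -/
def relF {γ : Type} : ∀ {k : ℕ}, rels012 z u b k → (Fin k → (Fin ℓ ⊕ γ)) →
    (relLang (rels012 (zN ℓ z u b) (uN ℓ z u b) b)).Formula γ
  | 0, r, _ => Relations.formula (n := 0) (zz r) Fin.elim0
  | 1, r, a =>
    match a 0 with
    | Sum.inl i => Relations.formula (n := 0) (zU r i) Fin.elim0
    | Sum.inr j => Relations.formula (n := 1) (uu r) ![Term.var j]
  | 2, r, a =>
    match a 0, a 1 with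
    | Sum.inl i, Sum.inl i' => Relations.formula (n := 0) (zB r i i') Fin.elim0
    | Sum.inl i, Sum.inr j => Relations.formula (n := 1) (uL r i) ![Term.var j]
    | Sum.inr j, Sum.inl i => Relations.formula (n := 1) (uR r i) ![Term.var j]
    | Sum.inr j, Sum.inr j' =>
      Relations.formula (n := 2)
        (r : (relLang (rels012 (zN ℓ z u b) (uN ℓ z u b) b)).Relations 2)
        ![Term.var j, Term.var j']
  | (_ + 3), r, _ => nomatch r

/-- `Fin.snoc` specialized to option-valued tag functions. -/
def snocO {m : ℕ} (σ : Fin m → Option (Fin ℓ)) (o : Option (Fin ℓ)) :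
    Fin (m + 1) → Option (Fin ℓ) := Fin.snoc σ o

@[simp] lemma snocO_castSucc {m : ℕ} (σ : Fin m → Option (Fin ℓ)) (o : Option (Fin ℓ))
    (j : Fin m) : snocO σ o (Fin.castSucc j) = σ j := Fin.snoc_castSucc ..

@[simp] lemma snocO_last {m : ℕ} (σ : Fin m → Option (Fin ℓ)) (o : Option (Fin ℓ)) :
    snocO σ o (Fin.last m) = o := Fin.snoc_last ..

/-- Variable bookkeeping for the universal quantifier: untagged case. -/
def fN {m : ℕ} (σ : Fin m → Option (Fin ℓ)) :
    {j : Fin (m + 1) // snocO σ none j = none} → ({j : Fin m // σ j = none} ⊕ Fin 1) :=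
  fun p => Fin.lastCases (motive := fun j => snocO σ none j = none → _)
    (fun _ => Sum.inr 0)
    (fun j h => Sum.inl ⟨j, by rwa [snocO_castSucc] at h⟩) p.1 p.2

/-- Variable bookkeeping for the universal quantifier: tagged case. -/
def fS {m : ℕ} (σ : Fin m → Option (Fin ℓ)) (i : Fin ℓ) :
    {j : Fin (m + 1) // snocO σ (some i) j = none} → {j : Fin m // σ j = none} :=
  fun p => Fin.lastCases (motive := fun j => snocO σ (some i) j = none → _)
    (fun h => absurd h (by simp [snocO, Fin.snoc_last]))
    (fun j h => ⟨j, by rwa [snocO_castSucc] at h⟩) p.1 p.2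

/-- The formula translation. -/
noncomputable def T : ∀ {m : ℕ}, (cLang ℓ (rels012 z u b)).BoundedFormula Empty m →
    (σ : Fin m → Option (Fin ℓ)) →
    (relLang (rels012 (zN ℓ z u b) (uN ℓ z u b) b)).Formula {j : Fin m // σ j = none}
  | _, .falsum, _ => ⊥
  | _, .equal t₁ t₂, σ => eqF (cls σ t₁) (cls σ t₂)
  | _, .rel R ts, σ => relF R (fun x => cls σ (ts x))
  | _, .imp φ ψ, σ => (T φ σ).imp (T ψ σ)
  | _, .all φ, σ =>
      (Formula.iAlls (Fin 1) ((T φ (snocO σ none)).relabel (fN σ))) ⊓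
      BoundedFormula.iInf
        (fun i : Fin ℓ => (T φ (snocO σ (some i))).relabel (fS σ i))

end ManyOne

namespace ManyOne

variable {ℓ z u b n : ℕ}

/-- The structure on `Fin (n+ℓ)`. -/
def MS (S : ∀ k, rels012 z u b k → (Fin k → Fin (n + ℓ)) → Prop) :
    (cLang ℓ (rels012 z u b)).Structure (Fin (n + ℓ)) :=
  cLang.mkStructure (fun i => Fin.natAdd n i) S

/-- The structure on `Fin n`. -/
def NS (S : ∀ k, rels012 z u b k → (Fin k → Fin (n + ℓ)) → Prop) :
    (relLang (rels012 (zN ℓ z u b) (uN ℓ z u b) b)).Structure (Fin n) :=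
  relLang.mkStructure (F S)

lemma castAdd_ne_natAdd (y : Fin n) (i : Fin ℓ) :
    Fin.castAdd ℓ y ≠ Fin.natAdd n i := by
  have := y.isLt
  rw [Ne, Fin.ext_iff]
  simp only [Fin.coe_castAdd, Fin.coe_natAdd]
  omega

section Spec

variable (S : ∀ k, rels012 z u b k → (Fin k → Fin (n + ℓ)) → Prop)

/-- decoding of a tag -/
def dec (w : γ → Fin n) : Fin ℓ ⊕ γ → Fin (n + ℓ) :=
  Sum.elim (fun i => Fin.natAdd n i) (fun p => Fin.castAdd ℓ (w p))

lemma cls_spec {m : ℕ} (σ : Fin m → Option (Fin ℓ)) (v : Fin m → Fin (n + ℓ))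
    (w : {j : Fin m // σ j = none} → Fin n)
    (hv : ∀ j i, σ j = some i → v j = Fin.natAdd n i)
    (hw : ∀ j (h : σ j = none), v j = Fin.castAdd ℓ (w ⟨j, h⟩))
    (t : (cLang ℓ (rels012 z u b)).Term (Empty ⊕ Fin m)) :
    (letI := MS S
     Term.realize (Sum.elim (fun e => e.elim) v) t) = dec w (cls σ t) := by
  induction t with
  | var x =>
    rcases x with e | j
    · exact e.elim
    · show v j = dec w (cls σ (.var (Sum.inr j)))
      have hc : cls (z := z) (u := u) (b := b) σ (.var (Sum.inr j)) =
          (match h : σ j with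
           | some i => Sum.inl i
           | none => Sum.inr ⟨j, h⟩) := rfl
      rw [hc]
      split
      · rename_i i h; exact hv j i h
      · rename_i h; exact hw j h
  | @func l f args ih =>
    match l, f with
    | 0, c => exact rfl
    | (l + 1), f => exact (f : Empty).elim

lemma eqF_spec {γ : Type} (c d : Fin ℓ ⊕ γ) (w : γ → Fin n) :
    (letI := NS S
     (eqF (z := z) (u := u) (b := b) c d).Realize w) ↔ dec w c = dec w d := by
  letI := NS S
  rcases c with i | j <;> rcases d with i' | j'
  · by_cases h : i = i'
    · simp [eqF, h]
    · simp only [eqF, if_neg h, dec, Sum.elim_inl]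
      simp only [Fin.ext_iff, Fin.coe_natAdd]
      constructor
      · intro hh; exact absurd hh (by simp [Formula.Realize, BoundedFormula.Realize])
      · intro hh; exact absurd (Fin.val_injective (by omega : (i : ℕ) = i')) h
  · simpa [eqF, dec] using (castAdd_ne_natAdd (w j') i).symm
  · simpa [eqF, dec] using castAdd_ne_natAdd (w j) i'
  · simp [eqF, dec, Fin.ext_iff]

lemma relF_spec {γ : Type} {k : ℕ} (r : rels012 z u b k) (a : Fin k → Fin ℓ ⊕ γ)
    (w : γ → Fin n) :
    (letI := NS S
     (relF r a).Realize w) ↔ S k r (fun x => dec w (a x)) := by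
  letI := NS S
  match k, r with
  | 0, r =>
    simp only [relF, Formula.realize_rel]
    erw [Formula.realize_rel]
    show F S 0 (zz r) _ ↔ _
    rw [F_zz _ r]
    exact iff_of_eq (congrArg _ (fun0_eq _ _))
  | 1, r =>
    rcases h : a 0 with i | j
    · simp only [relF, h, Formula.realize_rel]
      erw [Formula.realize_rel]
      show F S 0 (zU r i) _ ↔ _
      rw [F_zU _ r]
      refine iff_of_eq (congrArg _ ?_)
      funext x; fin_cases x; simp [dec, h]
    · simp only [relF, h, Formula.realize_rel]
      erw [Formula.realize_rel]
      show F S 1 (uu r) _ ↔ _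
      rw [F_uu _ r]
      refine iff_of_eq (congrArg _ ?_)
      funext x; fin_cases x; simp [dec, h]
  | 2, r =>
    rcases h0 : a 0 with i0 | j0 <;> rcases h1 : a 1 with i1 | j1
    · simp only [relF, h0, h1, Formula.realize_rel]
      erw [Formula.realize_rel]
      show F S 0 (zB r i0 i1) _ ↔ _
      rw [F_zB _ r]
      refine iff_of_eq (congrArg _ ?_)
      funext x; fin_cases x <;> simp [dec, h0, h1]
    · simp only [relF, h0, h1, Formula.realize_rel]
      erw [Formula.realize_rel]
      show F S 1 (uL r i0) _ ↔ _
      rw [F_uL _ r]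
      refine iff_of_eq (congrArg _ ?_)
      funext x; fin_cases x <;> simp [dec, h0, h1]
    · simp only [relF, h0, h1, Formula.realize_rel]
      erw [Formula.realize_rel]
      show F S 1 (uR r i1) _ ↔ _
      rw [F_uR _ r]
      refine iff_of_eq (congrArg _ ?_)
      funext x; fin_cases x <;> simp [dec, h0, h1]
    · simp only [relF, h0, h1, Formula.realize_rel]
      show F S 2 r _ ↔ _
      rw [F_2 _ r]
      refine iff_of_eq (congrArg _ ?_)
      funext x; fin_cases x <;> simp [dec, h0, h1]
  | (k + 3), r => exact (r : Empty).elim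

end Spec
end ManyOne

namespace ManyOne

variable {ℓ z u b n : ℕ}

@[simp] lemma fN_last {m : ℕ} (σ : Fin m → Option (Fin ℓ)) (h) :
    fN σ ⟨Fin.last m, h⟩ = Sum.inr 0 := by
  simp [fN]

@[simp] lemma fN_cast {m : ℕ} (σ : Fin m → Option (Fin ℓ)) (j : Fin m) (h) :
    fN σ ⟨Fin.castSucc j, h⟩ = Sum.inl ⟨j, by simpa using h⟩ := by
  simp [fN]

@[simp] lemma fS_cast {m : ℕ} (σ : Fin m → Option (Fin ℓ)) (i : Fin ℓ) (j : Fin m) (h) :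
    fS σ i ⟨Fin.castSucc j, h⟩ = ⟨j, by simpa using h⟩ := by
  simp [fS]

variable (S : ∀ k, rels012 z u b k → (Fin k → Fin (n + ℓ)) → Prop)

lemma T_spec {m : ℕ} (φ : (cLang ℓ (rels012 z u b)).BoundedFormula Empty m) :
    ∀ (σ : Fin m → Option (Fin ℓ)) (v : Fin m → Fin (n + ℓ))
      (w : {j : Fin m // σ j = none} → Fin n),
      (∀ j i, σ j = some i → v j = Fin.natAdd n i) →
      (∀ j (h : σ j = none), v j = Fin.castAdd ℓ (w ⟨j, h⟩)) →
      ((letI := MS S; φ.Realize (fun e => e.elim) v) ↔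
       (letI := NS S; (T φ σ).Realize w)) := by
  induction φ with
  | falsum =>
    intro σ v w hv hw
    letI := MS S; letI := NS S
    simp [T, BoundedFormula.Realize, Formula.Realize]
  | equal t₁ t₂ =>
    intro σ v w hv hw
    letI := MS S; letI := NS S
    have hL : (BoundedFormula.equal t₁ t₂).Realize (fun e : Empty => e.elim) v ↔
        (Term.realize (Sum.elim (fun e : Empty => e.elim) v) t₁ =
         Term.realize (Sum.elim (fun e : Empty => e.elim) v) t₂) := Iff.rfl
    rw [hL, cls_spec S σ v w hv hw t₁, cls_spec S σ v w hv hw t₂]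
    exact (eqF_spec S _ _ w).symm
  | rel R ts =>
    intro σ v w hv hw
    letI := MS S; letI := NS S
    have hL : (BoundedFormula.rel R ts).Realize (fun e : Empty => e.elim) v ↔
        S _ R (fun i => Term.realize (Sum.elim (fun e : Empty => e.elim) v) (ts i)) := Iff.rfl
    rw [hL]
    have harg : (fun i => Term.realize (Sum.elim (fun e : Empty => e.elim) v) (ts i)) =
        fun i => dec w (cls σ (ts i)) := funext fun i => cls_spec S σ v w hv hw (ts i)
    rw [harg]
    exact (relF_spec S R _ w).symm
  | imp φ ψ ih1 ih2 =>
    intro σ v w hv hw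
    letI := MS S; letI := NS S
    rw [BoundedFormula.realize_imp]
    have hR : (T (φ.imp ψ) σ).Realize w ↔ ((T φ σ).Realize w → (T ψ σ).Realize w) :=
      BoundedFormula.realize_imp
    rw [hR]
    exact imp_congr (ih1 σ v w hv hw) (ih2 σ v w hv hw)
  | all φ ih =>
    intro σ v w hv hw
    letI := MS S; letI := NS S
    rw [BoundedFormula.realize_all]
    have LHSsplit : (∀ x : Fin (n + ℓ), φ.Realize (fun e : Empty => e.elim) (Fin.snoc v x)) ↔
        ((∀ y : Fin n, φ.Realize (fun e : Empty => e.elim) (Fin.snoc v (Fin.castAdd ℓ y))) ∧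
         (∀ i : Fin ℓ, φ.Realize (fun e : Empty => e.elim) (Fin.snoc v (Fin.natAdd n i)))) := by
      constructor
      · exact fun h => ⟨fun y => h _, fun i => h _⟩
      · rintro ⟨h1, h2⟩ x
        rcases fin_add_cases x with ⟨y, rfl⟩ | ⟨i, rfl⟩
        · exact h1 y
        · exact h2 i
    rw [LHSsplit]
    have hT : T (BoundedFormula.all φ) σ =
        (Formula.iAlls (Fin 1) ((T φ (snocO σ none)).relabel (fN σ))) ⊓
        BoundedFormula.iInf
          (fun i : Fin ℓ => (T φ (snocO σ (some i))).relabel (fS σ i)) := rfl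
    rw [hT, Formula.realize_inf, Formula.realize_iAlls]
    have hInf : Formula.Realize
          (BoundedFormula.iInf
            (fun i : Fin ℓ => Formula.relabel (fS σ i) (T φ (snocO σ (some i))))) w ↔
        ∀ i : Fin ℓ, Formula.Realize (Formula.relabel (fS σ i) (T φ (snocO σ (some i)))) w := by
      show BoundedFormula.Realize _ w default ↔ _
      exact BoundedFormula.realize_iInf
    refine and_congr ?_ ((forall_congr' fun i => ?_).trans hInf.symm)
    · -- untagged part
      have key : ∀ y : Fin n,
          (φ.Realize (fun e : Empty => e.elim) (Fin.snoc v (Fin.castAdd ℓ y)) ↔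
           (T φ (snocO σ none)).Realize
             (fun a => Sum.elim w (fun _ : Fin 1 => y) (fN σ a))) := by
        intro y
        refine ih (snocO σ none) _ _ ?_ ?_
        · intro j
          induction j using Fin.lastCases with
          | last => intro i hj; rw [snocO_last] at hj; exact absurd hj (by simp)
          | cast j =>
            intro i hj
            rw [snocO_castSucc] at hj
            rw [Fin.snoc_castSucc]
            exact hv j i hj
        · intro j
          induction j using Fin.lastCases with
          | last => intro h; rw [Fin.snoc_last, fN_last]; rfl
          | cast j =>
            intro h
            rw [Fin.snoc_castSucc, fN_cast]
            exact hw j (by simpa using h)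
      constructor
      · intro h x
        have hx : x = fun _ : Fin 1 => x 0 := funext fun i => congrArg x (Subsingleton.elim _ _)
        rw [hx]
        rw [Formula.realize_relabel]
        exact (key (x 0)).mp (h (x 0))
      · intro h y
        exact (key y).mpr (Formula.realize_relabel.mp (h (fun _ => y)))
    · -- tagged part
      rw [Formula.realize_relabel]
      refine ih (snocO σ (some i)) _ _ ?_ ?_
      · intro j
        induction j using Fin.lastCases with
        | last =>
          intro i' hj
          rw [snocO_last] at hj
          rw [Fin.snoc_last]
          obtain rfl : i = i' := by injection hj
          rfl
        | cast j =>
          intro i' hj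
          rw [snocO_castSucc] at hj
          rw [Fin.snoc_castSucc]
          exact hv j i' hj
      · intro j
        induction j using Fin.lastCases with
        | last => intro h; rw [snocO_last] at h; exact absurd h (by simp)
        | cast j =>
          intro h
          rw [Fin.snoc_castSucc]
          have := hw j (by simpa using h)
          rw [this]
          congr 1
          show w _ = w ((fS σ i) ⟨Fin.castSucc j, h⟩)
          rw [fS_cast]
      
end ManyOne
/-- **Many-one reduction to the case without constants (arity ≤ 2, with nullary symbols).**
For a vocabulary τ with ℓ constant symbols, z nullary, u unary and b binary relation
symbols, and a first-order sentence φ over τ, there is a relational vocabulary τ'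
(no constants) with z' ≥ z nullary symbols, u' ≥ u unary symbols and the same b binary
symbols, and a single first-order sentence φ' over τ', such that
f_φ(n) = Sp_{φ'}(n) for all n. -/
theorem many_one_reduction_no_constants (ℓ z u b : ℕ)
    (φ : (cLang ℓ (rels012 z u b)).Sentence) :
    ∃ (z' u' : ℕ), z ≤ z' ∧ u ≤ u' ∧
      ∃ φ' : (relLang (rels012 z' u' b)).Sentence,
        ∀ n : ℕ, fCount ℓ φ n = spCount φ' n := by
  classical
  refine ⟨ManyOne.zN ℓ z u b, ManyOne.uN ℓ z u b, Nat.le_add_right _ _, Nat.le_add_right _ _, ?_⟩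
  refine ⟨Formula.relabel (fun p => Fin.elim0 p.1)
    (ManyOne.T φ (fun j => j.elim0)), fun n => ?_⟩
  unfold fCount spCount
  refine Nat.card_congr (Equiv.subtypeEquiv ManyOne.E ?_)
  intro S
  letI := ManyOne.MS S
  letI := ManyOne.NS S
  have h1 := ManyOne.T_spec S φ (fun j => j.elim0) default (fun p => Fin.elim0 p.1)
    (fun j i h => j.elim0) (fun j h => j.elim0)
  show BoundedFormula.Realize φ default default ↔
    Formula.Realize (Formula.relabel (fun p => Fin.elim0 p.1)
      (ManyOne.T φ (fun j => j.elim0))) default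
  rw [show (default : Empty → Fin (n + ℓ)) = fun e : Empty => e.elim from
    funext fun e => e.elim]
  rw [Formula.realize_relabel]
  rw [show ((default : Empty → Fin n) ∘ fun p => Fin.elim0 p.1) =
    (fun p : {j : Fin 0 // (fun j : Fin 0 => j.elim0) j = none} => Fin.elim0 p.1) from
    funext fun p => p.1.elim0]
  exact h1
end

section
/- Let τ be a vocabulary consisting of constant symbols a_1,…,a_ℓ with ℓ ≥ 1, nullary relation symbols Z_1,…,Z_{ℓ_Z}, unary relation symbols U_1,…,U_{ℓ_U}, and binary relation symbols R_1,…,R_{ℓ_R}, and let φ be a first-order sentence over τ. Let τ' be the vocabulary with constant symbols a_1,…,a_{ℓ−1}, nullary relation symbols Z_1,…,Z_{ℓ_Z} together with new nullary symbols S_1,…,S_{ℓ_U} and D_1,…,D_{ℓ_R}, unary relation symbols U_1,…,U_{ℓ_U} together with new unary symbols I_1,…,I_{ℓ_R} and O_1,…,O_{ℓ_R}, and the same binary relation symbols R_1,…,R_{ℓ_R}. Then there exists a single first-order sentence φ' over τ' such that f_φ(n) = f_{φ'}(n) for all n ∈ ℕ. -/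
open FirstOrder Language

section Aux

variable {ℓ z u b n : ℕ}

abbrev LBig (ℓ z u b : ℕ) : Language := cLang (ℓ + 1) (rels012 z u b)
abbrev LSmall (ℓ z u b : ℕ) : Language :=
  cLang ℓ (rels012 (z + (u + b)) (u + 2 * b) b)

/-- Term translation: `none` means the term denotes the removed constant. -/
def mapT {k m : ℕ} (f : Fin k → Option (Fin m)) :
    (LBig ℓ z u b).Term (Empty ⊕ Fin k) →
      Option ((LSmall ℓ z u b).Term (Empty ⊕ Fin m))
  | .var (Sum.inl e) => e.elim
  | .var (Sum.inr i) => (f i).map fun j => Term.var (Sum.inr j)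
  | @Term.func _ _ l F _ =>
      match l, F with
      | 0, c =>
          if h : (c : Fin (ℓ + 1)).val < ℓ then
            some (Term.func (l := 0) (⟨(c : Fin (ℓ+1)).val, h⟩ : Fin ℓ) finZeroElim)
          else none
      | _ + 1, F => (F : Empty).elim

/-- Encoding: relations on `Fin (n+ℓ+1)` to relations on `Fin (n+ℓ)`. -/
def Enc (S : ∀ k, rels012 z u b k → (Fin k → Fin (n + ℓ + 1)) → Prop) :
    ∀ k, rels012 (z + (u + b)) (u + 2 * b) b k → (Fin k → Fin (n + ℓ)) → Prop
  | 0, r, _ =>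
      if h : (r : Fin (z + (u + b))).val < z then S 0 ⟨(r : Fin (z + (u+b))).val, h⟩ finZeroElim
      else if h2 : (r : Fin (z + (u + b))).val < z + u then
        S 1 ⟨(r : Fin (z + (u+b))).val - z, by omega⟩ fun _ => Fin.last (n + ℓ)
      else
        S 2 ⟨(r : Fin (z + (u+b))).val - z - u, by have := (r : Fin (z + (u+b))).isLt; omega⟩
          fun _ => Fin.last (n + ℓ)
  | 1, r, v =>
      if h : (r : Fin (u + 2 * b)).val < u then S 1 ⟨(r : Fin (u + 2*b)).val, h⟩ fun _ => (v 0).castSucc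
      else if h2 : (r : Fin (u + 2 * b)).val < u + b then
        S 2 ⟨(r : Fin (u + 2*b)).val - u, by omega⟩ ![(v 0).castSucc, Fin.last (n + ℓ)]
      else
        S 2 ⟨(r : Fin (u + 2*b)).val - u - b, by have := (r : Fin (u + 2*b)).isLt; omega⟩
          ![Fin.last (n + ℓ), (v 0).castSucc]
  | 2, r, v => S 2 r fun i => (v i).castSucc
  | _ + 3, r, _ => (r : Empty).elim

/-- Decoding: relations on `Fin (n+ℓ)` to relations on `Fin (n+ℓ+1)`. -/
def Dec (T : ∀ k, rels012 (z + (u + b)) (u + 2 * b) b k → (Fin k → Fin (n + ℓ)) → Prop) :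
    ∀ k, rels012 z u b k → (Fin k → Fin (n + ℓ + 1)) → Prop
  | 0, r, _ => T 0 ⟨(r : Fin z).val, by have := (r : Fin z).isLt; omega⟩ finZeroElim
  | 1, r, v =>
      if h : v 0 = Fin.last (n + ℓ) then
        T 0 ⟨z + (r : Fin u).val, by have := (r : Fin u).isLt; omega⟩ finZeroElim
      else T 1 ⟨(r : Fin u).val, by have := (r : Fin u).isLt; omega⟩ fun _ => (v 0).castPred h
  | 2, r, v =>
      if h0 : v 0 = Fin.last (n + ℓ) then
        if h1 : v 1 = Fin.last (n + ℓ) then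
          T 0 ⟨z + u + (r : Fin b).val, by have := (r : Fin b).isLt; omega⟩ finZeroElim
        else T 1 ⟨u + b + (r : Fin b).val, by have := (r : Fin b).isLt; omega⟩
          fun _ => (v 1).castPred h1
      else
        if h1 : v 1 = Fin.last (n + ℓ) then
          T 1 ⟨u + (r : Fin b).val, by have := (r : Fin b).isLt; omega⟩ fun _ => (v 0).castPred h0
        else T 2 r ![(v 0).castPred h0, (v 1).castPred h1]
  | _ + 3, r, _ => (r : Empty).elim

end Aux
section Aux2

variable {ℓ z u b n : ℕ}

private lemma app2 {α β : Type} (f : α → β → Prop) {a a' : α} {b b' : β}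
    (h1 : a = a') (h2 : b = b') : f a b = f a' b' := by rw [h1, h2]

lemma dec_enc (S : ∀ k, rels012 z u b k → (Fin k → Fin (n + ℓ + 1)) → Prop) :
    Dec (Enc S) = S := by
  funext k r v
  match k with
  | 0 =>
    obtain ⟨rv, hr⟩ := (r : Fin z)
    simp only [Dec, Enc]
    rw [dif_pos (show rv < z from hr)]
    exact app2 (S 0) (Fin.ext rfl) (funext fun i => i.elim0)
  | 1 =>
    obtain ⟨rv, hr⟩ := (r : Fin u)
    by_cases h : v 0 = Fin.last (n + ℓ)
    · simp only [Dec]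
      rw [dif_pos h]
      simp only [Enc]
      rw [dif_neg (show ¬ z + rv < z by omega), dif_pos (show z + rv < z + u by omega)]
      exact app2 (S 1) (Fin.ext (show z + rv - z = rv by omega))
        (funext fun i => by rw [show i = 0 from Subsingleton.elim i 0]; exact h.symm)
    · simp only [Dec]
      rw [dif_neg h]
      simp only [Enc]
      rw [dif_pos (show rv < u from hr)]
      exact app2 (S 1) (Fin.ext rfl)
        (funext fun i => by
          rw [show i = 0 from Subsingleton.elim i 0]
          exact Fin.castSucc_castPred _ h)
  | 2 =>
    obtain ⟨rv, hr⟩ := (r : Fin b)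
    by_cases h0 : v 0 = Fin.last (n + ℓ) <;> by_cases h1 : v 1 = Fin.last (n + ℓ)
    · simp only [Dec]
      rw [dif_pos h0, dif_pos h1]
      simp only [Enc]
      rw [dif_neg (show ¬ z + u + rv < z by omega), dif_neg (show ¬ z + u + rv < z + u by omega)]
      refine app2 (S 2) (Fin.ext (show z + u + rv - z - u = rv by omega)) (funext fun i => ?_)
      match i with
      | ⟨0, _⟩ => exact h0.symm
      | ⟨1, _⟩ => exact h1.symm
    · simp only [Dec]
      rw [dif_pos h0, dif_neg h1]
      simp only [Enc]
      rw [dif_neg (show ¬ u + b + rv < u by omega), dif_neg (show ¬ u + b + rv < u + b by omega)]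
      refine app2 (S 2) (Fin.ext (show u + b + rv - u - b = rv by omega)) (funext fun i => ?_)
      match i with
      | ⟨0, _⟩ => exact h0.symm
      | ⟨1, _⟩ => exact Fin.castSucc_castPred _ h1
    · simp only [Dec]
      rw [dif_neg h0, dif_pos h1]
      simp only [Enc]
      rw [dif_neg (show ¬ u + rv < u by omega), dif_pos (show u + rv < u + b by omega)]
      refine app2 (S 2) (Fin.ext (show u + rv - u = rv by omega)) (funext fun i => ?_)
      match i with
      | ⟨0, _⟩ => exact Fin.castSucc_castPred _ h0
      | ⟨1, _⟩ => exact h1.symm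
    · simp only [Dec]
      rw [dif_neg h0, dif_neg h1]
      simp only [Enc]
      refine app2 (S 2) rfl (funext fun i => ?_)
      match i with
      | ⟨0, _⟩ => exact Fin.castSucc_castPred _ h0
      | ⟨1, _⟩ => exact Fin.castSucc_castPred _ h1
  | k + 3 => exact (r : Empty).elim

lemma enc_dec (T : ∀ k, rels012 (z + (u + b)) (u + 2 * b) b k → (Fin k → Fin (n + ℓ)) → Prop) :
    Enc (Dec T) = T := by
  funext k r v
  match k with
  | 0 =>
    obtain ⟨rv, hr⟩ := (r : Fin (z + (u + b)))
    simp only [Enc]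
    split_ifs with h h2
    · simp only [Dec]
      exact app2 (T 0) (Fin.ext rfl) (funext fun i => i.elim0)
    · simp only [Dec]
      rw [dif_pos trivial]
      exact app2 (T 0) (Fin.ext (show z + (rv - z) = rv by omega)) (funext fun i => i.elim0)
    · simp only [Dec]
      rw [dif_pos trivial, dif_pos trivial]
      exact app2 (T 0) (Fin.ext (show z + u + (rv - z - u) = rv by omega))
        (funext fun i => i.elim0)
  | 1 =>
    obtain ⟨rv, hr⟩ := (r : Fin (u + 2 * b))
    simp only [Enc]
    split_ifs with h h2
    · simp only [Dec]
      rw [dif_neg (Fin.castSucc_lt_last (v 0)).ne]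
      exact app2 (T 1) (Fin.ext rfl)
        (funext fun i => by
          rw [show i = 0 from Subsingleton.elim i 0]
          exact Fin.castPred_castSucc ((Fin.castSucc_lt_last _).ne))
    · simp only [Dec]
      rw [dif_neg (show ¬ (![(v 0).castSucc, Fin.last (n + ℓ)] 0 = Fin.last (n + ℓ)) from
          (Fin.castSucc_lt_last (v 0)).ne),
        dif_pos (show ![(v 0).castSucc, Fin.last (n + ℓ)] 1 = Fin.last (n + ℓ) from rfl)]
      exact app2 (T 1) (Fin.ext (show u + (rv - u) = rv by omega))
        (funext fun i => by
          rw [show i = 0 from Subsingleton.elim i 0]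
          exact Fin.castPred_castSucc ((Fin.castSucc_lt_last _).ne))
    · simp only [Dec]
      rw [dif_pos (show ![Fin.last (n + ℓ), (v 0).castSucc] 0 = Fin.last (n + ℓ) from rfl),
        dif_neg (show ¬ (![Fin.last (n + ℓ), (v 0).castSucc] 1 = Fin.last (n + ℓ)) from
          (Fin.castSucc_lt_last (v 0)).ne)]
      exact app2 (T 1) (Fin.ext (show u + b + (rv - u - b) = rv by omega))
        (funext fun i => by
          rw [show i = 0 from Subsingleton.elim i 0]
          exact Fin.castPred_castSucc ((Fin.castSucc_lt_last _).ne))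
  | 2 =>
    simp only [Enc, Dec]
    rw [dif_neg (Fin.castSucc_lt_last (v 0)).ne, dif_neg (Fin.castSucc_lt_last (v 1)).ne]
    refine app2 (T 2) rfl (funext fun i => ?_)
    match i with
    | ⟨0, _⟩ => exact Fin.castPred_castSucc ((Fin.castSucc_lt_last _).ne)
    | ⟨1, _⟩ => exact Fin.castPred_castSucc ((Fin.castSucc_lt_last _).ne)
  | k + 3 => exact (r : Empty).elim

end Aux2
section Aux3

variable {ℓ z u b n : ℕ}

/-- The structure on the big universe. -/
def bigStruct (n : ℕ) (S : ∀ k, rels012 z u b k → (Fin k → Fin (n + ℓ + 1)) → Prop) :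
    (LBig ℓ z u b).Structure (Fin (n + ℓ + 1)) :=
  cLang.mkStructure (fun i => Fin.natAdd n i) S

/-- The structure on the small universe. -/
def smallStruct (n : ℕ)
    (T : ∀ k, rels012 (z + (u + b)) (u + 2 * b) b k → (Fin k → Fin (n + ℓ)) → Prop) :
    (LSmall ℓ z u b).Structure (Fin (n + ℓ)) :=
  cLang.mkStructure (fun i => Fin.natAdd n i) T

lemma mapT_realize (S : ∀ k, rels012 z u b k → (Fin k → Fin (n + ℓ + 1)) → Prop)
    (T : ∀ k, rels012 (z + (u + b)) (u + 2 * b) b k → (Fin k → Fin (n + ℓ)) → Prop)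
    {k m : ℕ} (f : Fin k → Option (Fin m)) (w : Fin m → Fin (n + ℓ))
    (t : (LBig ℓ z u b).Term (Empty ⊕ Fin k)) :
    letI := bigStruct n S
    letI := smallStruct n T
    (mapT f t).elim (Fin.last (n + ℓ))
        (fun s => (Term.realize (Sum.elim Empty.elim w) s).castSucc)
      = Term.realize
          (Sum.elim Empty.elim fun i => (f i).elim (Fin.last (n + ℓ)) fun j => (w j).castSucc) t := by
  letI := bigStruct (ℓ := ℓ) (z := z) (u := u) (b := b) n S
  letI := smallStruct (ℓ := ℓ) (z := z) (u := u) (b := b) n T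
  induction t with
  | var v =>
    match v with
    | Sum.inl e => exact e.elim
    | Sum.inr i =>
      cases hfi : f i <;> simp [mapT, hfi, Term.realize]
  | @func l F ts ih =>
    match l, F with
    | 0, c =>
      simp only [mapT]
      by_cases h : (c : Fin (ℓ + 1)).val < ℓ
      · rw [dif_pos h]
        simp only [Option.elim, Term.realize]
        apply Fin.ext
        simp [bigStruct, smallStruct, cLang.mkStructure, Fin.castSucc, Fin.natAdd]
        rfl
      · rw [dif_neg h]
        simp only [Option.elim, Term.realize]
        apply Fin.ext
        have := (c : Fin (ℓ + 1)).isLt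
        simp only [bigStruct, cLang.mkStructure, Fin.natAdd, Fin.val_last]
        change _ = n + (c : Fin (ℓ + 1)).val
        omega
    | l + 1, F => exact (F : Empty).elim

end Aux3
section Aux4

variable {ℓ z u b : ℕ}

/-- The formula translation. `f` tells for each free variable whether it is a genuine
element (`some j`) or the removed constant (`none`). -/
def Tr : ∀ {k : ℕ}, (LBig ℓ z u b).BoundedFormula Empty k →
    ∀ {m : ℕ}, (Fin k → Option (Fin m)) → (LSmall ℓ z u b).BoundedFormula Empty m
  | _, .falsum, _, _ => ⊥
  | _, .equal t₁ t₂, _, f =>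
      match mapT f t₁, mapT f t₂ with
      | none, none => ⊤
      | some s₁, some s₂ => BoundedFormula.equal s₁ s₂
      | _, _ => ⊥
  | _, @BoundedFormula.rel _ _ _ l R ts, _, f =>
      match l, R, ts with
      | 0, R, _ =>
          BoundedFormula.rel (l := 0)
            (show rels012 (z + (u + b)) (u + 2 * b) b 0 from
              ⟨(R : Fin z).val, by have := (R : Fin z).isLt; omega⟩) finZeroElim
      | 1, R, ts =>
          match mapT f (ts 0) with
          | none =>
              BoundedFormula.rel (l := 0)
                (show rels012 (z + (u + b)) (u + 2 * b) b 0 from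
                  ⟨z + (R : Fin u).val, by have := (R : Fin u).isLt; omega⟩) finZeroElim
          | some s =>
              BoundedFormula.rel (l := 1)
                (show rels012 (z + (u + b)) (u + 2 * b) b 1 from
                  ⟨(R : Fin u).val, by have := (R : Fin u).isLt; omega⟩) ![s]
      | 2, R, ts =>
          match mapT f (ts 0), mapT f (ts 1) with
          | none, none =>
              BoundedFormula.rel (l := 0)
                (show rels012 (z + (u + b)) (u + 2 * b) b 0 from
                  ⟨z + u + (R : Fin b).val, by have := (R : Fin b).isLt; omega⟩) finZeroElim
          | some s, none =>
              BoundedFormula.rel (l := 1)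
                (show rels012 (z + (u + b)) (u + 2 * b) b 1 from
                  ⟨u + (R : Fin b).val, by have := (R : Fin b).isLt; omega⟩) ![s]
          | none, some s =>
              BoundedFormula.rel (l := 1)
                (show rels012 (z + (u + b)) (u + 2 * b) b 1 from
                  ⟨u + b + (R : Fin b).val, by have := (R : Fin b).isLt; omega⟩) ![s]
          | some s₁, some s₂ =>
              BoundedFormula.rel (l := 2)
                (show rels012 (z + (u + b)) (u + 2 * b) b 2 from R) ![s₁, s₂]
      | _ + 3, R, _ => (R : Empty).elim
  | _, .imp ψ₁ ψ₂, _, f => (Tr ψ₁ f).imp (Tr ψ₂ f)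
  | _, .all ψ, _, f =>
      (BoundedFormula.all
          (Tr ψ (Fin.snoc (fun i => (f i).map Fin.castSucc) (some (Fin.last _))))) ⊓
        Tr ψ (Fin.snoc f none)

end Aux4
section Aux5

variable {ℓ z u b n : ℕ}

lemma tr_realize (S : ∀ k, rels012 z u b k → (Fin k → Fin (n + ℓ + 1)) → Prop)
    {k : ℕ} (ψ : (LBig ℓ z u b).BoundedFormula Empty k) :
    ∀ {m : ℕ} (f : Fin k → Option (Fin m)) (w : Fin m → Fin (n + ℓ)),
    letI := bigStruct n S
    letI := smallStruct n (Enc S)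
    ((Tr ψ f).Realize Empty.elim w ↔
      ψ.Realize Empty.elim
        (fun i => (f i).elim (Fin.last (n + ℓ)) fun j => (w j).castSucc)) := by
  letI := bigStruct (ℓ := ℓ) (z := z) (u := u) (b := b) n S
  letI := smallStruct (ℓ := ℓ) (z := z) (u := u) (b := b) n (Enc S)
  induction ψ with
  | falsum =>
    intro m f w
    simp [Tr, BoundedFormula.Realize]
  | @equal k t₁ t₂ =>
    intro m f w
    have e₁ := mapT_realize S (Enc S) f w t₁
    have e₂ := mapT_realize S (Enc S) f w t₂
    cases h₁ : mapT f t₁ <;> cases h₂ : mapT f t₂ <;>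
      rw [h₁] at e₁ <;> rw [h₂] at e₂ <;>
      simp only [Tr, h₁, h₂, BoundedFormula.Realize] <;>
      rw [← e₁, ← e₂] <;>
      simp only [Option.elim]
    · simp
    · exact iff_of_false id (Fin.castSucc_lt_last _).ne'
    · exact iff_of_false id (Fin.castSucc_lt_last _).ne
    · exact Fin.castSucc_inj.symm
  | @rel k l R ts =>
    intro m f w
    match l, R, ts with
    | 0, R, ts =>
      simp only [Tr, BoundedFormula.Realize]
      show Enc S 0 _ _ ↔ S 0 R _
      simp only [Enc]
      rw [dif_pos (R : Fin z).isLt]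
      exact iff_of_eq (app2 (S 0) (Fin.ext rfl) (funext fun i => i.elim0))
    | 1, R, ts =>
      have e := mapT_realize S (Enc S) f w (ts 0)
      cases h : mapT f (ts 0) <;> rw [h] at e <;> simp only [Option.elim] at e
      · simp only [Tr, h, BoundedFormula.Realize]
        show Enc S 0 _ _ ↔ S 1 R _
        simp only [Enc]
        rw [dif_neg (show ¬ z + (R : Fin u).val < z by clear e; omega),
          dif_pos (show z + (R : Fin u).val < z + u by clear e; have := (R : Fin u).isLt; omega)]
        refine iff_of_eq (app2 (S 1) (Fin.ext (show z + (R : Fin u).val - z = _ by clear e; omega))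
          (funext fun i => ?_))
        rw [show i = 0 from Subsingleton.elim i 0]
        exact e
      · simp only [Tr, h, BoundedFormula.Realize]
        show Enc S 1 _ _ ↔ S 1 R _
        simp only [Enc]
        rw [dif_pos (R : Fin u).isLt]
        refine iff_of_eq (app2 (S 1) (Fin.ext rfl) (funext fun i => ?_))
        rw [show i = 0 from Subsingleton.elim i 0]
        exact e
    | 2, R, ts =>
      have e₁ := mapT_realize S (Enc S) f w (ts 0)
      have e₂ := mapT_realize S (Enc S) f w (ts 1)
      cases h₁ : mapT f (ts 0) <;> cases h₂ : mapT f (ts 1) <;>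
        rw [h₁] at e₁ <;> rw [h₂] at e₂ <;> simp only [Option.elim] at e₁ e₂
      · simp only [Tr, h₁, h₂, BoundedFormula.Realize]
        show Enc S 0 _ _ ↔ S 2 R _
        simp only [Enc]
        rw [dif_neg (show ¬ z + u + (R : Fin b).val < z by clear e₁ e₂; omega),
          dif_neg (show ¬ z + u + (R : Fin b).val < z + u by clear e₁ e₂; omega)]
        refine iff_of_eq (app2 (S 2) (Fin.ext (show z + u + (R : Fin b).val - z - u = _ by clear e₁ e₂; omega))
          (funext fun i => ?_))
        match i with
        | ⟨0, _⟩ => exact e₁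
        | ⟨1, _⟩ => exact e₂
      · simp only [Tr, h₁, h₂, BoundedFormula.Realize]
        show Enc S 1 _ _ ↔ S 2 R _
        simp only [Enc]
        rw [dif_neg (show ¬ u + b + (R : Fin b).val < u by clear e₁ e₂; omega),
          dif_neg (show ¬ u + b + (R : Fin b).val < u + b by clear e₁ e₂; omega)]
        refine iff_of_eq (app2 (S 2) (Fin.ext (show u + b + (R : Fin b).val - u - b = _ by clear e₁ e₂; omega))
          (funext fun i => ?_))
        match i with
        | ⟨0, _⟩ => exact e₁
        | ⟨1, _⟩ => exact e₂
      · simp only [Tr, h₁, h₂, BoundedFormula.Realize]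
        show Enc S 1 _ _ ↔ S 2 R _
        simp only [Enc]
        rw [dif_neg (show ¬ u + (R : Fin b).val < u by clear e₁ e₂; omega),
          dif_pos (show u + (R : Fin b).val < u + b by clear e₁ e₂; have := (R : Fin b).isLt; omega)]
        refine iff_of_eq (app2 (S 2) (Fin.ext (show u + (R : Fin b).val - u = _ by clear e₁ e₂; omega))
          (funext fun i => ?_))
        match i with
        | ⟨0, _⟩ => exact e₁
        | ⟨1, _⟩ => exact e₂
      · simp only [Tr, h₁, h₂, BoundedFormula.Realize]
        show Enc S 2 _ _ ↔ S 2 R _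
        simp only [Enc]
        refine iff_of_eq (app2 (S 2) rfl (funext fun i => ?_))
        match i with
        | ⟨0, _⟩ => exact e₁
        | ⟨1, _⟩ => exact e₂
    | l + 3, R, ts => exact (R : Empty).elim
  | @imp k ψ₁ ψ₂ ih₁ ih₂ =>
    intro m f w
    simp only [Tr, BoundedFormula.Realize]
    rw [ih₁ f w, ih₂ f w]
  | @all k ψ ih =>
    intro m f w
    simp only [Tr, BoundedFormula.realize_inf, BoundedFormula.realize_all]
    set VV : Fin k → Fin (n + ℓ + 1) :=
      fun i => (f i).elim (Fin.last (n + ℓ)) fun j => (w j).castSucc with hVV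
    have hval1 : ∀ y : Fin (n + ℓ),
        (fun i => ((Fin.snoc (fun i => (f i).map Fin.castSucc)
            (some (Fin.last _)) : Fin (k+1) → Option (Fin (m+1))) i).elim
            (Fin.last (n + ℓ)) fun j => ((Fin.snoc w y : Fin (m+1) → _) j).castSucc)
          = Fin.snoc VV y.castSucc := by
      intro y
      funext i
      refine Fin.lastCases ?_ (fun j => ?_) i
      · simp [Fin.snoc_last]
      · simp only [Fin.snoc_castSucc]
        cases hfj : f j <;> simp [hfj, hVV, Fin.snoc_castSucc]
    have hval2 :
        (fun i => ((Fin.snoc f none : Fin (k+1) → Option (Fin m)) i).elim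
            (Fin.last (n + ℓ)) fun j => (w j).castSucc)
          = Fin.snoc VV (Fin.last (n + ℓ)) := by
      funext i
      refine Fin.lastCases ?_ (fun j => ?_) i
      · simp [Fin.snoc_last]
      · simp [Fin.snoc_castSucc, hVV]
    constructor
    · rintro ⟨h1, h2⟩ x
      refine Fin.lastCases ?_ (fun y => ?_) x
      · have := (ih (Fin.snoc f none) w).1 h2
        rwa [hval2] at this
      · have := (ih _ (Fin.snoc w y)).1 (h1 y)
        rwa [hval1 y] at this
    · intro h
      refine ⟨fun y => ?_, ?_⟩
      · refine (ih _ (Fin.snoc w y)).2 ?_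
        rw [hval1 y]
        exact h _
      · refine (ih (Fin.snoc f none) w).2 ?_
        rw [hval2]
        exact h _

end Aux5

private lemma realize_ext {L : Language} {M : Type} [L.Structure M]
    (ψ : L.BoundedFormula Empty 0) {v v' : Empty → M} {xs xs' : Fin 0 → M} :
    ψ.Realize v xs ↔ ψ.Realize v' xs' := by
  rw [Subsingleton.elim v v', Subsingleton.elim xs xs']

/-- **Removing a single constant in a many-one manner.**
Let τ have ℓ+1 constant symbols, z nullary, u unary and b binary relation symbols, and
let φ be a first-order sentence over τ.  Let τ' have the constant symbols a₁,…,a_ℓ, the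
z original nullary symbols together with u + b new nullary symbols (the S's and the D's),
the u original unary symbols together with 2b new unary symbols (the I's and the O's),
and the same b binary symbols.  Then there is a single first-order sentence φ' over τ'
with f_φ(n) = f_{φ'}(n) for all n. -/
theorem remove_single_constant_many_one (ℓ z u b : ℕ)
    (φ : (cLang (ℓ + 1) (rels012 z u b)).Sentence) :
    ∃ φ' : (cLang ℓ (rels012 (z + (u + b)) (u + 2 * b) b)).Sentence,
      ∀ n : ℕ, fCount (ℓ + 1) φ n = fCount ℓ φ' n := by
  refine ⟨Tr φ (fun i : Fin 0 => i.elim0), fun n => ?_⟩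
  unfold fCount
  refine Nat.card_congr
    (Equiv.subtypeEquiv
      (⟨Enc, Dec, fun S => dec_enc S, fun T => enc_dec T⟩ :
        (∀ k, rels012 z u b k → (Fin k → Fin (n + ℓ + 1)) → Prop) ≃
          (∀ k, rels012 (z + (u + b)) (u + 2 * b) b k → (Fin k → Fin (n + ℓ)) → Prop))
      fun S => ?_)
  letI : (cLang (ℓ + 1) (rels012 z u b)).Structure (Fin (n + (ℓ + 1))) := bigStruct n S
  letI : (cLang ℓ (rels012 (z + (u + b)) (u + 2 * b) b)).Structure (Fin (n + ℓ)) :=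
    smallStruct n (Enc S)
  have h := tr_realize (n := n) S φ (fun i : Fin 0 => i.elim0) (default : Fin 0 → Fin (n + ℓ))
  exact (realize_ext φ).trans (h.symm.trans (realize_ext _))
end

section
/- Let τ be a vocabulary consisting of finitely many constant symbols a_1,…,a_ℓ and finitely many relation symbols R̄ of arbitrary arities, and let φ be a first-order sentence over τ. Then there exists a vocabulary τ' with no constant symbols whose relation symbols R̄' contain R̄, have the same maximum arity as R̄, and include no new relation symbols of that maximum arity, and a single first-order sentence φ' over τ', such that f_φ(n) = Sp_{φ'}(n) for all n ∈ ℕ. -/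
open FirstOrder Language

/-- Relation symbols indexed by ι with arity function ρ : the symbols of arity k are
those i : ι with ρ i = k. -/
def arels {ι : Type} (ρ : ι → ℕ) : ℕ → Type := fun k => { i : ι // ρ i = k }

namespace MOR
open FirstOrder Language

/-! ### Combinatorics of splitting `Fin (n + ℓ)` -/

section Glue

variable {ℓ n : ℕ}

/-- Combine a pattern `σ` (telling which coordinates are constants) with an
assignment `w` of the non-constant coordinates into a tuple in `Fin (n + ℓ)`. -/
def glue {m : ℕ} (σ : Fin m → Option (Fin ℓ)) (w : {j // σ j = none} → Fin n) :
    Fin m → Fin (n + ℓ) := fun j =>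
  match h : σ j with
  | none => finSumFinEquiv (Sum.inl (w ⟨j, h⟩))
  | some c => finSumFinEquiv (Sum.inr c)

theorem glue_eq_none {m : ℕ} {σ : Fin m → Option (Fin ℓ)} {w : {j // σ j = none} → Fin n}
    {j : Fin m} (h : σ j = none) :
    glue σ w j = finSumFinEquiv (Sum.inl (w ⟨j, h⟩)) := by
  unfold glue
  split
  · rfl
  · next c h2 => rw [h] at h2; exact nomatch h2

theorem glue_eq_some {m : ℕ} {σ : Fin m → Option (Fin ℓ)} {w : {j // σ j = none} → Fin n}
    {j : Fin m} {c : Fin ℓ} (h : σ j = some c) :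
    glue σ w j = finSumFinEquiv (Sum.inr c) := by
  unfold glue
  split
  · next h2 => rw [h] at h2; exact nomatch h2
  · next d h2 => rw [h] at h2; cases h2; rfl

/-- The pattern of a tuple in `Fin (n + ℓ)`. -/
def pat {m : ℕ} (v : Fin m → Fin (n + ℓ)) (j : Fin m) : Option (Fin ℓ) :=
  Sum.elim (fun _ => none) some (finSumFinEquiv.symm (v j))

/-- Extraction of the non-constant coordinates of a tuple. -/
def low {m : ℕ} (v : Fin m → Fin (n + ℓ)) (j : {j // pat v j = none}) : Fin n :=
  match h : finSumFinEquiv.symm (v j.1) with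
  | .inl a => a
  | .inr _ => absurd j.2 (by simp [pat, h])

theorem low_spec {m : ℕ} (v : Fin m → Fin (n + ℓ)) (j : {j // pat v j = none}) :
    (Sum.inl (low v j) : Fin n ⊕ Fin ℓ) = finSumFinEquiv.symm (v j.1) := by
  unfold low
  split
  · next a h => exact h.symm
  · next c h => exact absurd j.2 (by simp [pat, h])

theorem pat_glue {m : ℕ} (σ : Fin m → Option (Fin ℓ)) (w : {j // σ j = none} → Fin n) :
    pat (glue σ w) = σ := by
  funext j
  cases h : σ j with
  | none => rw [pat, glue_eq_none h]; simp
  | some c => rw [pat, glue_eq_some h]; simp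

theorem glue_pat {m : ℕ} (v : Fin m → Fin (n + ℓ)) :
    glue (pat v) (fun j => low v j) = v := by
  funext j
  rcases hs : finSumFinEquiv.symm (v j) with a | c
  · have hn : pat v j = none := by simp [pat, hs]
    rw [glue_eq_none hn, low_spec v ⟨j, hn⟩, Equiv.apply_symm_apply]
  · have hc : pat v j = some c := by simp [pat, hs]
    rw [glue_eq_some hc, ← hs, Equiv.apply_symm_apply]

theorem low_glue {m : ℕ} (σ : Fin m → Option (Fin ℓ)) (w : {j // σ j = none} → Fin n)
    {j : Fin m} (h : σ j = none) (h2 : pat (glue σ w) j = none) :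
    low (glue σ w) ⟨j, h2⟩ = w ⟨j, h⟩ := by
  have hs := low_spec (glue σ w) ⟨j, h2⟩
  rw [glue_eq_none h (w := w), Equiv.symm_apply_apply] at hs
  exact Sum.inl.inj hs

end Glue

end MOR
namespace MOR

section Snoc

variable {ℓ n : ℕ}

/-- Non-dependent `Fin.snoc` for option-valued patterns. -/
def snocP {m : ℕ} (σ : Fin m → Option (Fin ℓ)) (o : Option (Fin ℓ)) :
    Fin (m + 1) → Option (Fin ℓ) :=
  Fin.snoc σ o

@[simp] theorem snocP_last {m : ℕ} (σ : Fin m → Option (Fin ℓ)) (o : Option (Fin ℓ)) :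
    snocP σ o (Fin.last m) = o :=
  Fin.snoc_last _ _

@[simp] theorem snocP_castSucc {m : ℕ} (σ : Fin m → Option (Fin ℓ)) (o : Option (Fin ℓ))
    (x : Fin m) : snocP σ o (Fin.castSucc x) = σ x :=
  Fin.snoc_castSucc _ _ _

/-- Variable-renaming map used when translating a universal quantifier
(new variable ranges over genuine elements). -/
def liftMap {m : ℕ} (σ : Fin m → Option (Fin ℓ)) :
    {j : Fin (m + 1) // snocP σ none j = none} → {j : Fin m // σ j = none} ⊕ Unit :=
  fun j =>
    if h : j.1 = Fin.last m then Sum.inr ()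
    else Sum.inl ⟨j.1.castPred h, by
      have h2 := j.2
      rw [← Fin.castSucc_castPred j.1 h, snocP_castSucc] at h2
      exact h2⟩

/-- Variable-renaming map used when translating a universal quantifier
(new variable pinned to the constant `c`). -/
def dropMap {m : ℕ} (σ : Fin m → Option (Fin ℓ)) (c : Fin ℓ) :
    {j : Fin (m + 1) // snocP σ (some c) j = none} → {j : Fin m // σ j = none} := fun j =>
  have hne : j.1 ≠ Fin.last m := by
    intro h
    have h2 := j.2
    rw [h, snocP_last] at h2
    exact nomatch h2
  ⟨j.1.castPred hne, by
    have h2 := j.2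
    rw [← Fin.castSucc_castPred j.1 hne, snocP_castSucc] at h2
    exact h2⟩

theorem glue_snoc_none {m : ℕ} (σ : Fin m → Option (Fin ℓ)) (w : {j // σ j = none} → Fin n)
    (y : Fin n) :
    Fin.snoc (glue σ w) (finSumFinEquiv (Sum.inl y)) =
      glue (snocP σ none) (fun j => Sum.elim w (fun _ => y) (liftMap σ j)) := by
  funext j
  refine Fin.lastCases ?_ (fun x => ?_) j
  · have hn : snocP σ (none : Option (Fin ℓ)) (Fin.last m) = none := snocP_last _ _
    rw [Fin.snoc_last, glue_eq_none hn]
    have : liftMap σ ⟨Fin.last m, hn⟩ = Sum.inr () := by simp [liftMap]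
    rw [this]
    rfl
  · rw [Fin.snoc_castSucc]
    cases h : σ x with
    | none =>
      have hn : snocP σ (none : Option (Fin ℓ)) (Fin.castSucc x) = none := by
        rw [snocP_castSucc]; exact h
      rw [glue_eq_none h, glue_eq_none hn]
      have : liftMap σ ⟨Fin.castSucc x, hn⟩ = Sum.inl ⟨x, h⟩ := by
        have hne : Fin.castSucc x ≠ Fin.last m := (Fin.castSucc_lt_last x).ne
        simp only [liftMap, hne, dif_neg, not_false_iff]
        congr 1
      rw [this]
      rfl
    | some d =>
      have hc : snocP σ (none : Option (Fin ℓ)) (Fin.castSucc x) = some d := by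
        rw [snocP_castSucc]; exact h
      rw [glue_eq_some h, glue_eq_some hc]

theorem glue_snoc_some {m : ℕ} (σ : Fin m → Option (Fin ℓ)) (w : {j // σ j = none} → Fin n)
    (c : Fin ℓ) :
    Fin.snoc (glue σ w) (finSumFinEquiv (Sum.inr c)) =
      glue (snocP σ (some c)) (fun j => w (dropMap σ c j)) := by
  funext j
  refine Fin.lastCases ?_ (fun x => ?_) j
  · have hc : snocP σ (some c) (Fin.last m) = some c := snocP_last _ _
    rw [Fin.snoc_last, glue_eq_some hc]
  · rw [Fin.snoc_castSucc]
    cases h : σ x with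
    | none =>
      have hn : snocP σ (some c) (Fin.castSucc x) = none := by
        rw [snocP_castSucc]; exact h
      rw [glue_eq_none h, glue_eq_none hn]
      have : dropMap σ c ⟨Fin.castSucc x, hn⟩ = ⟨x, h⟩ := Subtype.ext (by simp [dropMap])
      rw [this]
    | some d =>
      have hc : snocP σ (some c) (Fin.castSucc x) = some d := by
        rw [snocP_castSucc]; exact h
      rw [glue_eq_some h, glue_eq_some hc]

end Snoc

end MOR
namespace MOR
open FirstOrder Language

section Vocab

variable {ι : Type} (ρ : ι → ℕ) (ℓ : ℕ) {n : ℕ}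

/-- Arity of the new relation symbols: a symbol of the new vocabulary is an old
symbol together with a pattern pinning some argument positions to constants;
its arity is the number of unpinned positions. -/
def rho' : (Σ i : ι, (Fin (ρ i) → Option (Fin ℓ))) → ℕ :=
  fun p => Fintype.card {j // p.2 j = none}

variable {ρ} {ℓ}

/-- Decoding: interpretation of the new relation symbols on `Fin n` gives an
interpretation of the old relation symbols on `Fin (n + ℓ)`. -/
def decode (S' : ∀ k, arels (rho' ρ ℓ) k → (Fin k → Fin n) → Prop) :
    ∀ k, arels ρ k → (Fin k → Fin (n + ℓ)) → Prop := fun _k r v =>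
  S' _ ⟨⟨r.1, fun j => pat v (Fin.cast r.2 j)⟩, rfl⟩
    (fun x => low v ⟨Fin.cast r.2 ((Fintype.equivFin _).symm x).1,
      ((Fintype.equivFin _).symm x).2⟩)

/-- Encoding: interpretation of the old relation symbols on `Fin (n + ℓ)` gives an
interpretation of the new relation symbols on `Fin n`. -/
def encode (S : ∀ k, arels ρ k → (Fin k → Fin (n + ℓ)) → Prop) :
    ∀ k, arels (rho' ρ ℓ) k → (Fin k → Fin n) → Prop := fun _k r' w' =>
  S _ ⟨r'.1.1, rfl⟩ (glue r'.1.2 (fun j => w' (Fin.cast r'.2 (Fintype.equivFin _ j))))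

theorem S'_app_congr (S' : ∀ k, arels (rho' ρ ℓ) k → (Fin k → Fin n) → Prop) {i : ι}
    {σ₁ σ₂ : Fin (ρ i) → Option (Fin ℓ)} (h : σ₁ = σ₂)
    (W : {j // σ₂ j = none} → Fin n)
    (a₁ : Fin (rho' ρ ℓ ⟨i, σ₁⟩) → Fin n)
    (ha : ∀ x, a₁ x = W ⟨((Fintype.equivFin {j // σ₁ j = none}).symm x).1, by
      rw [← h]; exact ((Fintype.equivFin {j // σ₁ j = none}).symm x).2⟩) :
    (S' _ ⟨⟨i, σ₁⟩, rfl⟩ a₁ ↔ S' _ ⟨⟨i, σ₂⟩, rfl⟩ (fun x => W ((Fintype.equivFin _).symm x))) := by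
  subst h
  have : a₁ = fun x => W ((Fintype.equivFin _).symm x) := funext fun x => ha x
  exact iff_of_eq (congrArg _ this)


theorem decode_encode (S : ∀ k, arels ρ k → (Fin k → Fin (n + ℓ)) → Prop) :
    decode (encode S) = S := by
  funext k r v
  obtain ⟨i, hk⟩ := r
  subst hk
  show S _ ⟨i, rfl⟩ _ = S _ ⟨i, rfl⟩ v
  congr 1
  show glue (pat v)
      (fun j => low v ⟨((Fintype.equivFin {j // pat v j = none}).symm
          ((Fintype.equivFin {j // pat v j = none}) j)).1,
        ((Fintype.equivFin {j // pat v j = none}).symm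
          ((Fintype.equivFin {j // pat v j = none}) j)).2⟩) = v
  have h2 : (fun j => low v ⟨((Fintype.equivFin {j // pat v j = none}).symm
          ((Fintype.equivFin {j // pat v j = none}) j)).1,
        ((Fintype.equivFin {j // pat v j = none}).symm
          ((Fintype.equivFin {j // pat v j = none}) j)).2⟩) = fun j => low v j :=
    funext fun j => congrArg (low v) (Subtype.ext
      (congrArg Subtype.val (Equiv.symm_apply_apply (Fintype.equivFin _) j)))
  rw [h2]
  exact glue_pat v

theorem encode_decode (S' : ∀ k, arels (rho' ρ ℓ) k → (Fin k → Fin n) → Prop) :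
    encode (decode S') = S' := by
  funext k r' w'
  obtain ⟨⟨i, σ⟩, hK⟩ := r'
  subst hK
  refine propext ?_
  show decode S' _ ⟨i, rfl⟩ (glue σ _) ↔ _
  set wf : {j // σ j = none} → Fin n :=
    fun j => w' (Fin.cast rfl (Fintype.equivFin _ j)) with hwf
  show S' _ ⟨⟨i, fun j => pat (glue σ wf) (Fin.cast rfl j)⟩, rfl⟩ _ ↔ _
  have h : (fun j => pat (glue σ wf) (Fin.cast rfl j)) = σ := by
    funext j
    exact congrFun (pat_glue σ wf) j
  have step := S'_app_congr S' h (fun j => w' (Fintype.equivFin _ j))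
    (fun x => low (glue σ wf) ⟨Fin.cast rfl ((Fintype.equivFin _).symm x).1,
      ((Fintype.equivFin _).symm x).2⟩)
    (fun x => by
      set j0 := (Fintype.equivFin {j // (fun j => pat (glue σ wf) (Fin.cast rfl j)) j = none}).symm x
      have hj : σ j0.1 = none := by rw [← congrFun h j0.1]; exact j0.2
      calc low (glue σ wf) ⟨Fin.cast rfl j0.1, j0.2⟩
          = wf ⟨j0.1, hj⟩ := low_glue σ wf hj j0.2
        _ = w' (Fintype.equivFin _ ⟨j0.1, hj⟩) := rfl)
  refine step.trans (iff_of_eq (congrArg (S' _ ⟨⟨i, σ⟩, rfl⟩) ?_))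
  exact funext fun x => congrArg w' (Equiv.apply_symm_apply _ x)

/-- The correspondence of interpretations as an equivalence. -/
def structEquiv : (∀ k, arels (rho' ρ ℓ) k → (Fin k → Fin n) → Prop) ≃
    (∀ k, arels ρ k → (Fin k → Fin (n + ℓ)) → Prop) where
  toFun := decode
  invFun := encode
  left_inv := encode_decode
  right_inv := decode_encode

end Vocab

end MOR
namespace MOR
open FirstOrder Language

section Trans

variable {ι : Type} {ρ : ι → ℕ} {ℓ n : ℕ}

/-- The structure on `Fin (n + ℓ)` determined by `S'` via decoding. -/
abbrev Mstr (S' : ∀ k, arels (rho' ρ ℓ) k → (Fin k → Fin n) → Prop) :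
    (cLang ℓ (arels ρ)).Structure (Fin (n + ℓ)) :=
  cLang.mkStructure (fun i => Fin.natAdd n i) (decode S')

/-- The structure on `Fin n` determined by `S'`. -/
abbrev Nstr (S' : ∀ k, arels (rho' ρ ℓ) k → (Fin k → Fin n) → Prop) :
    (relLang (arels (rho' ρ ℓ))).Structure (Fin n) :=
  relLang.mkStructure S'

/-- A term of `cLang` is a variable or a constant. -/
def resolveT {R : ℕ → Type} {m : ℕ} : (cLang ℓ R).Term (Empty ⊕ Fin m) → Fin m ⊕ Fin ℓ
  | .var (Sum.inl e) => e.elim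
  | .var (Sum.inr x) => Sum.inl x
  | Term.func (l := 0) f _ => Sum.inr f
  | Term.func (l := _ + 1) f _ => f.elim

/-- Resolve a variable-or-constant against a pattern `σ`. -/
def resC {m : ℕ} (σ : Fin m → Option (Fin ℓ)) :
    Fin m ⊕ Fin ℓ → {j : Fin m // σ j = none} ⊕ Fin ℓ
  | .inl x =>
    match h : σ x with
    | none => Sum.inl ⟨x, h⟩
    | some c => Sum.inr c
  | .inr c => Sum.inr c

/-- Value in `Fin (n + ℓ)` of a resolved variable-or-constant. -/
def cval {m : ℕ} (σ : Fin m → Option (Fin ℓ)) (w : {j // σ j = none} → Fin n) :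
    {j : Fin m // σ j = none} ⊕ Fin ℓ → Fin (n + ℓ) :=
  Sum.elim (fun j => finSumFinEquiv (Sum.inl (w j))) fun c => finSumFinEquiv (Sum.inr c)

theorem glue_elim {m : ℕ} (σ : Fin m → Option (Fin ℓ)) (w : {j // σ j = none} → Fin n)
    (s : Fin m ⊕ Fin ℓ) :
    Sum.elim (glue σ w) (fun c => finSumFinEquiv (Sum.inr c)) s = cval σ w (resC σ s) := by
  rcases s with x | c
  · show glue σ w x = _
    simp only [resC]
    split
    · next h => rw [glue_eq_none h]; rfl
    · next c h => rw [glue_eq_some h]; rfl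
  · rfl

theorem realize_resolveT (S' : ∀ k, arels (rho' ρ ℓ) k → (Fin k → Fin n) → Prop) {m : ℕ}
    (t : (cLang ℓ (arels ρ)).Term (Empty ⊕ Fin m)) (xs : Fin m → Fin (n + ℓ)) :
    (letI := Mstr S';
      t.realize (Sum.elim Empty.elim xs)) =
      Sum.elim xs (fun c => finSumFinEquiv (Sum.inr c)) (resolveT t) := by
  letI := Mstr S'
  match t with
  | .var (Sum.inl e) => exact e.elim
  | .var (Sum.inr x) => rfl
  | Term.func (l := 0) f ts =>
    exact (finSumFinEquiv_apply_right f).symm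
  | Term.func (l := _ + 1) f ts => exact f.elim

/-- Extract the variable from a resolved variable-or-constant known to be a variable. -/
def extract {A B : Type} : (s : A ⊕ B) →
    Sum.elim (fun _ => (none : Option B)) some s = none → A
  | .inl a, _ => a
  | .inr _, h => absurd h (by simp)

theorem extract_spec {A B : Type} (s : A ⊕ B)
    (h : Sum.elim (fun _ => (none : Option B)) some s = none) :
    s = Sum.inl (extract s h) := by
  cases s with
  | inl a => rfl
  | inr b => exact absurd h (by simp)

theorem pat_cval {m : ℕ} (σ : Fin m → Option (Fin ℓ)) (w : {j // σ j = none} → Fin n)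
    (s : {j // σ j = none} ⊕ Fin ℓ) :
    Sum.elim (fun _ => (none : Option (Fin ℓ))) some (finSumFinEquiv.symm (cval σ w s)) =
      Sum.elim (fun _ => (none : Option (Fin ℓ))) some s := by
  rcases s with a | c <;> simp [cval]

/-- The constant-pattern of a relation-symbol application. -/
def tau {m : ℕ} (σ : Fin m → Option (Fin ℓ)) {k : ℕ} (r : arels ρ k)
    (ts : Fin k → (cLang ℓ (arels ρ)).Term (Empty ⊕ Fin m)) :
    Fin (ρ r.1) → Option (Fin ℓ) := fun j =>
  Sum.elim (fun _ => none) some (resC σ (resolveT (ts (Fin.cast r.2 j))))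

/-- Translation of a bounded formula of `cLang` over a pattern `σ` of pinnings of
its free variables into a formula of the relational language with free variables
the unpinned ones. -/
noncomputable def trF : ∀ {m : ℕ} (σ : Fin m → Option (Fin ℓ)),
    (cLang ℓ (arels ρ)).BoundedFormula Empty m →
    (relLang (arels (rho' ρ ℓ))).Formula {j : Fin m // σ j = none}
  | _, σ, .falsum => ⊥
  | _, σ, .equal t₁ t₂ =>
    match resC σ (resolveT t₁), resC σ (resolveT t₂) with
    | .inl a, .inl b => Term.equal (Term.var a) (Term.var b)
    | .inl _, .inr _ => ⊥
    | .inr _, .inl _ => ⊥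
    | .inr c, .inr d => if c = d then ⊤ else ⊥
  | _, σ, .rel r ts =>
    Relations.formula
      (L := relLang (arels (rho' ρ ℓ)))
      (⟨⟨r.1, tau σ r ts⟩, rfl⟩ : arels (rho' ρ ℓ) (rho' ρ ℓ ⟨r.1, tau σ r ts⟩))
      (fun x => Term.var (extract
        (resC σ (resolveT (ts (Fin.cast r.2
          ((Fintype.equivFin {j // tau σ r ts j = none}).symm x).1))))
        ((Fintype.equivFin {j // tau σ r ts j = none}).symm x).2))
  | _, σ, .imp f g => (trF σ f).imp (trF σ g)
  | _, σ, .all f =>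
    (Formula.iAlls Unit ((trF (snocP σ none) f).relabel (liftMap σ))) ⊓
      BoundedFormula.iInf fun c : Fin ℓ =>
        Formula.relabel (dropMap σ c) (trF (snocP σ (some c)) f)

end Trans

end MOR
namespace MOR
open FirstOrder Language

section Realize

variable {ι : Type} {ρ : ι → ℕ} {ℓ n : ℕ}

theorem low_cval {m k : ℕ} (σ : Fin m → Option (Fin ℓ)) (w : {j // σ j = none} → Fin n)
    (v : Fin k → Fin (n + ℓ)) (j : Fin k) (s : {j : Fin m // σ j = none} ⊕ Fin ℓ)
    (hv : v j = cval σ w s)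
    (p : Sum.elim (fun _ => (none : Option (Fin ℓ))) some s = none)
    (h2 : pat v j = none) :
    low v ⟨j, h2⟩ = w (extract s p) := by
  rcases s with a | c
  · have hlow := low_spec v ⟨j, h2⟩
    rw [hv, show cval σ w (Sum.inl a) = finSumFinEquiv (Sum.inl (w a)) from rfl,
      Equiv.symm_apply_apply] at hlow
    exact Sum.inl.inj hlow
  · exact absurd p (by simp)

theorem forall_split (P : Fin (n + ℓ) → Prop) :
    (∀ x, P x) ↔ ((∀ y : Fin n, P (finSumFinEquiv (Sum.inl y))) ∧
      ∀ c : Fin ℓ, P (finSumFinEquiv (Sum.inr c))) := by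
  constructor
  · exact fun H => ⟨fun y => H _, fun c => H _⟩
  · rintro ⟨H1, H2⟩ x
    rcases hs : finSumFinEquiv.symm x with y | c
    · have hx : x = finSumFinEquiv (Sum.inl y) := by rw [← hs, Equiv.apply_symm_apply]
      rw [hx]; exact H1 y
    · have hx : x = finSumFinEquiv (Sum.inr c) := by rw [← hs, Equiv.apply_symm_apply]
      rw [hx]; exact H2 c

theorem realize_iInf' {L : Language} {M : Type} [L.Structure M] {β α : Type} [Finite β]
    (f : β → L.Formula α) (v : α → M) :
    Formula.Realize (BoundedFormula.iInf f) v ↔ ∀ b, (f b).Realize v :=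
  BoundedFormula.realize_iInf

theorem realize_trF (S' : ∀ k, arels (rho' ρ ℓ) k → (Fin k → Fin n) → Prop) :
    ∀ {m : ℕ} (f : (cLang ℓ (arels ρ)).BoundedFormula Empty m)
      (σ : Fin m → Option (Fin ℓ)) (w : {j // σ j = none} → Fin n),
      ((letI := Mstr S'; f.Realize Empty.elim (glue σ w)) ↔
        (letI := Nstr S'; (trF σ f).Realize w)) := by
  intro m f
  induction f with
  | falsum => exact fun σ w => Iff.rfl
  | equal t₁ t₂ =>
    intro σ w
    letI := Mstr S'
    have h1 : Term.realize (Sum.elim Empty.elim (glue σ w)) t₁ =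
        cval σ w (resC σ (resolveT t₁)) :=
      (realize_resolveT S' t₁ (glue σ w)).trans (glue_elim σ w _)
    have h2 : Term.realize (Sum.elim Empty.elim (glue σ w)) t₂ =
        cval σ w (resC σ (resolveT t₂)) :=
      (realize_resolveT S' t₂ (glue σ w)).trans (glue_elim σ w _)
    show Term.realize (Sum.elim Empty.elim (glue σ w)) t₁ =
        Term.realize (Sum.elim Empty.elim (glue σ w)) t₂ ↔ _
    rw [h1, h2]
    simp only [trF]
    rcases h₁ : resC σ (resolveT t₁) with a | c <;>
      rcases h₂ : resC σ (resolveT t₂) with b | d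
    · simp [cval, Term.realize]
    · simp only [cval, Sum.elim_inl, Sum.elim_inr, finSumFinEquiv_apply_left,
        finSumFinEquiv_apply_right, trF]
      simp only [Fin.ext_iff, Fin.coe_castAdd, Fin.coe_natAdd]
      have := (w a).isLt
      simp only [Formula.realize_bot, iff_false]
      omega
    · simp only [cval, Sum.elim_inl, Sum.elim_inr, finSumFinEquiv_apply_left,
        finSumFinEquiv_apply_right, trF]
      simp only [Fin.ext_iff, Fin.coe_castAdd, Fin.coe_natAdd]
      have := (w b).isLt
      simp only [Formula.realize_bot, iff_false]
      omega
    · rcases eq_or_ne c d with rfl | hcd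
      · simp [cval]
      · have hne : (c : ℕ) ≠ (d : ℕ) := fun h => hcd (Fin.ext h)
        simp only [cval, Sum.elim_inr, finSumFinEquiv_apply_right, trF, hcd, if_neg]
        letI := Nstr S'
        simp only [if_false, Formula.realize_bot, iff_false, Fin.ext_iff, Fin.coe_natAdd]
        omega
  | rel R ts =>
    intro σ w
    letI := Mstr S'
    obtain ⟨i, hk⟩ := R
    subst hk
    have hvts : (fun x => Term.realize (L := cLang ℓ (arels ρ)) (M := Fin (n + ℓ))
          (Sum.elim Empty.elim (glue σ w)) (ts x)) =
        fun x => cval σ w (resC σ (resolveT (ts x))) :=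
      funext fun x => (realize_resolveT S' (ts x) (glue σ w)).trans (glue_elim σ w _)
    refine Iff.trans (iff_of_eq (congrArg (decode S' (ρ i) ⟨i, rfl⟩) hvts)) ?_
    refine Iff.trans (S'_app_congr S'
      (funext fun j => pat_cval σ w (resC σ (resolveT (ts (Fin.cast rfl j)))))
      (fun j0 => w (extract (resC σ (resolveT (ts (Fin.cast rfl j0.1)))) j0.2))
      _ (fun x => low_cval σ w _ _ _ rfl _ _)) ?_
    exact Iff.rfl
  | imp f₁ f₂ ih₁ ih₂ =>
    exact fun σ w => imp_congr (ih₁ σ w) (ih₂ σ w)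
  | all f ih =>
    intro σ w
    refine Iff.trans (forall_split _) ?_
    simp only [trF]
    letI := Nstr S'
    rw [Formula.realize_inf]
    refine and_congr ?_ ?_
    · have key : ∀ y : Fin n,
          ((letI := Mstr S'; f.Realize Empty.elim
            (Fin.snoc (glue σ w) (finSumFinEquiv (Sum.inl y)))) ↔
          (trF (snocP σ none) f).Realize fun j => Sum.elim w (fun _ => y) (liftMap σ j)) := by
        intro y
        rw [glue_snoc_none]
        exact ih (snocP σ none) _
      rw [Formula.realize_iAlls]
      simp only [Formula.realize_relabel]
      constructor
      · intro H i
        exact (key (i ())).mp (H (i ()))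
      · intro H y
        exact (key y).mpr (H fun _ => y)
    · rw [realize_iInf']
      refine forall_congr' fun c => ?_
      have key : (letI := Mstr S'; f.Realize Empty.elim
            (Fin.snoc (glue σ w) (finSumFinEquiv (Sum.inr c)))) ↔
          (trF (snocP σ (some c)) f).Realize fun j => w (dropMap σ c j) := by
        rw [glue_snoc_some]
        exact ih (snocP σ (some c)) _
      refine key.trans ?_
      rw [Formula.realize_relabel]
      exact Iff.rfl

end Realize

end MOR
namespace MOR
open FirstOrder Language

section Final

variable {ι : Type} {ρ : ι → ℕ} {ℓ : ℕ}

/-- The translated sentence. -/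
noncomputable def trS (φ : (cLang ℓ (arels ρ)).Sentence) :
    (relLang (arels (rho' ρ ℓ))).Sentence :=
  Formula.relabel (fun j => Fin.elim0 j.1)
    (trF (fun _ : Fin 0 => (none : Option (Fin ℓ))) φ)

theorem sat_iff {n : ℕ} (S' : ∀ k, arels (rho' ρ ℓ) k → (Fin k → Fin n) → Prop)
    (φ : (cLang ℓ (arels ρ)).Sentence) :
    ((letI := Mstr S'; Fin (n + ℓ) ⊨ φ) ↔ (letI := Nstr S'; Fin n ⊨ trS φ)) := by
  letI := Mstr S'
  letI := Nstr S'
  have h := realize_trF S' φ (fun _ : Fin 0 => (none : Option (Fin ℓ)))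
    (fun j => Fin.elim0 j.1)
  have e1 : (Empty.elim : Empty → Fin (n + ℓ)) = default := funext fun e => e.elim
  have e2 : glue (fun _ : Fin 0 => (none : Option (Fin ℓ))) (fun j => Fin.elim0 j.1) =
      (default : Fin 0 → Fin (n + ℓ)) := funext fun j => j.elim0
  rw [e1, e2] at h
  refine h.trans ?_
  show _ ↔ Formula.Realize (trS φ) (default : Empty → Fin n)
  unfold trS
  rw [Formula.realize_relabel]
  exact iff_of_eq (congrArg _ (funext fun j => Fin.elim0 j.1))

end Final

end MOR


/-- **Many-one reduction allowing higher arity.**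
For a vocabulary τ with ℓ constant symbols and finitely many relation symbols of
arbitrary arities (indexed by the finite type ι, with arities ρ), and a first-order
sentence φ over τ, there is a relational vocabulary τ' (no constants) whose relation
symbols ι' contain ι (arities preserved), where every new symbol has arity strictly
smaller than the arity of some original symbol (so τ' has the same maximum arity as τ
and no new symbols of maximum arity), and a single first-order sentence φ' over τ'
such that f_φ(n) = Sp_{φ'}(n) for all n. -/
theorem many_one_reduction_higher_arity (ι : Type) [Fintype ι] (ρ : ι → ℕ) (ℓ : ℕ)
    (φ : (cLang ℓ (arels ρ)).Sentence) :
    ∃ (ι' : Type) (_ : Fintype ι') (ρ' : ι' → ℕ) (e : ι ↪ ι'),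
      (∀ i : ι, ρ' (e i) = ρ i) ∧
      (∀ j : ι', j ∉ Set.range e → ∃ i : ι, ρ' j < ρ i) ∧
      ∃ φ' : (relLang (arels ρ')).Sentence,
        ∀ n : ℕ, fCount ℓ φ n = spCount φ' n := by
  refine ⟨(Σ i : ι, (Fin (ρ i) → Option (Fin ℓ))), inferInstance, MOR.rho' ρ ℓ,
    ⟨fun i => ⟨i, fun _ => none⟩, fun a b h => congrArg Sigma.fst h⟩, ?_, ?_, MOR.trS φ, ?_⟩
  · intro i
    have h : MOR.rho' ρ ℓ ⟨i, fun _ => none⟩ = Fintype.card (Fin (ρ i)) :=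
      Fintype.card_congr (Equiv.subtypeUnivEquiv fun j => rfl)
    show MOR.rho' ρ ℓ ⟨i, fun _ => none⟩ = ρ i
    rw [h, Fintype.card_fin]
  · rintro ⟨i, σc⟩ hj
    refine ⟨i, ?_⟩
    have hne : σc ≠ fun _ => none := by
      intro h
      exact hj ⟨i, by exact congrArg (Sigma.mk i) h.symm⟩
    obtain ⟨j₀, hj₀⟩ : ∃ j₀, σc j₀ ≠ none := by
      by_contra hall
      push_neg at hall
      exact hne (funext hall)
    have h2 : MOR.rho' ρ ℓ ⟨i, σc⟩ < Fintype.card (Fin (ρ i)) :=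
      Fintype.card_subtype_lt (x := j₀) hj₀
    rwa [Fintype.card_fin] at h2
  · intro n
    unfold fCount spCount
    exact Nat.card_congr (Equiv.symm (Equiv.subtypeEquiv MOR.structEquiv
      fun S' => (MOR.sat_iff S' φ).symm))
end

section
/- Let τ be a vocabulary consisting of constant symbols a_1,…,a_ℓ with ℓ ≥ 1 and relation symbols R_1,…,R_{ℓ_R} of arities ρ_1,…,ρ_{ℓ_R}, and let φ be a first-order sentence over τ. Let τ' be the vocabulary with constant symbols a_1,…,a_{ℓ−1} and, for each i ≤ ℓ_R and each subset A ⊆ [ρ_i], a relation symbol R_{i,A} of arity ρ_i − |A| (with R_{i,∅} identified with R_i). Then there exists a single first-order sentence φ' over τ' such that f_φ(n) = f_{φ'}(n) for all n ∈ ℕ; in particular τ' has the same maximum arity as τ and no new relation symbols of that maximum arity. -/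
open FirstOrder Language

namespace RC

/-! ### Combinatorial gadgets -/

noncomputable def eB {K : ℕ} (B : Finset (Fin K)) : Fin (K - B.card) ≃o {x : Fin K // x ∈ Bᶜ} :=
  Bᶜ.orderIsoOfFin (by simp [Finset.card_compl])

noncomputable def fill {K N : ℕ} (B : Finset (Fin K)) (w : Fin (K - B.card) → Fin N) :
    Fin K → Fin (N + 1) :=
  fun j => if hj : j ∈ B then Fin.last N
    else (w ((eB B).symm ⟨j, Finset.mem_compl.2 hj⟩)).castSucc

noncomputable def starSet {K N : ℕ} (v : Fin K → Fin (N + 1)) : Finset (Fin K) :=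
  Finset.univ.filter (fun j => v j = Fin.last N)

noncomputable def compressB {K N : ℕ} (B : Finset (Fin K)) (v : Fin K → Fin (N + 1))
    (hv : ∀ j : {x : Fin K // x ∈ Bᶜ}, v j.1 ≠ Fin.last N) : Fin (K - B.card) → Fin N :=
  fun j => (v (eB B j).1).castPred (hv _)

theorem mem_starSet {K N : ℕ} {v : Fin K → Fin (N + 1)} {j : Fin K} :
    j ∈ starSet v ↔ v j = Fin.last N := by simp [starSet]

theorem starSet_fill {K N : ℕ} (B : Finset (Fin K)) (w : Fin (K - B.card) → Fin N) :
    starSet (fill B w) = B := by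
  ext j
  rw [mem_starSet, fill]
  split
  · simpa
  · simp_all [Fin.ext_iff, (w _).isLt.ne]

theorem compressB_fill {K N : ℕ} (B : Finset (Fin K)) (w : Fin (K - B.card) → Fin N) (hv) :
    compressB B (fill B w) hv = w := by
  funext j
  have h1 : ((eB B j : {x : Fin K // x ∈ Bᶜ}) : Fin K) ∉ B := Finset.mem_compl.1 (eB B j).2
  simp [compressB, fill, h1]

theorem fill_compressB {K N : ℕ} (v : Fin K → Fin (N + 1)) (hv) :
    fill (starSet v) (compressB (starSet v) v hv) = v := by
  funext j
  rw [fill]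
  split
  · next hj => exact (mem_starSet.1 hj).symm
  · next hj =>
    rw [compressB]
    simp

theorem fill_cast {K N : ℕ} {B B' : Finset (Fin K)} (h : B' = B)
    (w : Fin (K - B'.card) → Fin N) :
    fill B' w = fill B (fun j => w (Fin.cast (by rw [h]) j)) := by
  subst h; rfl

theorem eB_congr {K : ℕ} {B B' : Finset (Fin K)} (h : B' = B) (j : Fin (K - B'.card)) :
    ((eB B' j : {x : Fin K // x ∈ B'ᶜ}) : Fin K)
      = ((eB B (Fin.cast (by rw [h]) j) : {x : Fin K // x ∈ Bᶜ}) : Fin K) := by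
  subst h; rfl

/-! ### The two languages and the encoding of structures -/

variable {ι : Type} (ρ : ι → ℕ) (ℓ : ℕ)

abbrev L1 : Language := cLang (ℓ + 1) (arels ρ)
abbrev L2 : Language := cLang ℓ (arels (fun p : (i : ι) × Finset (Fin (ρ i)) =>
  ρ p.1 - p.2.card))

noncomputable def D {N : ℕ} (S : ∀ k, arels ρ k → (Fin k → Fin (N + 1)) → Prop) :
    ∀ k, arels (fun p : (i : ι) × Finset (Fin (ρ i)) => ρ p.1 - p.2.card) k →
      (Fin k → Fin N) → Prop :=
  fun _ r w => S (ρ r.1.1) ⟨r.1.1, rfl⟩ (fill r.1.2 (fun j => w (Fin.cast r.2 j)))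

noncomputable def U {N : ℕ}
    (S' : ∀ k, arels (fun p : (i : ι) × Finset (Fin (ρ i)) => ρ p.1 - p.2.card) k →
      (Fin k → Fin N) → Prop) :
    ∀ k, arels ρ k → (Fin k → Fin (N + 1)) → Prop :=
  fun _ r v =>
    S' (ρ r.1 - (starSet (fun j => v (Fin.cast r.2 j))).card) ⟨⟨r.1, _⟩, rfl⟩
      (compressB (starSet (fun j => v (Fin.cast r.2 j))) (fun j => v (Fin.cast r.2 j))
        (fun j h => (Finset.mem_compl.1 j.2) (mem_starSet.2 h)))

theorem U_D {N : ℕ} (S : ∀ k, arels ρ k → (Fin k → Fin (N + 1)) → Prop) :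
    U ρ (D ρ S) = S := by
  funext k r v
  obtain ⟨i, rfl⟩ := r
  show D ρ S _ _ _ = _
  unfold D
  exact congrArg _ (fill_compressB v _)

theorem S'_congr {N : ℕ}
    (S' : ∀ k, arels (fun p : (i : ι) × Finset (Fin (ρ i)) => ρ p.1 - p.2.card) k →
      (Fin k → Fin N) → Prop) {i : ι} {B₂ B : Finset (Fin (ρ i))} (hB : B₂ = B)
    (u : Fin (ρ i - B₂.card) → Fin N) (w : Fin (ρ i - B.card) → Fin N)
    (hw : ∀ j, u j = w (Fin.cast (by rw [hB]) j)) :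
    S' (ρ i - B₂.card) ⟨⟨i, B₂⟩, rfl⟩ u = S' (ρ i - B.card) ⟨⟨i, B⟩, rfl⟩ w := by
  subst hB
  have : u = w := funext fun j => hw j
  rw [this]

theorem D_U_aux {N : ℕ}
    (S' : ∀ k, arels (fun p : (i : ι) × Finset (Fin (ρ i)) => ρ p.1 - p.2.card) k →
      (Fin k → Fin N) → Prop) {i : ι} (B : Finset (Fin (ρ i)))
    (w : Fin (ρ i - B.card) → Fin N) (hv) :
    S' (ρ i - (starSet (fill B w)).card) ⟨⟨i, starSet (fill B w)⟩, rfl⟩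
      (compressB (starSet (fill B w)) (fill B w) hv)
    = S' (ρ i - B.card) ⟨⟨i, B⟩, rfl⟩ w := by
  refine S'_congr ρ S' (starSet_fill B w) _ w (fun j => ?_)
  apply Fin.ext
  rw [compressB]
  rw [Fin.coe_castPred]
  have hj1 : ((eB (starSet (fill B w)) j : _) : Fin (ρ i))
      = ((eB B (Fin.cast (by rw [starSet_fill B w]) j) : _) : Fin (ρ i)) :=
    eB_congr (starSet_fill B w) j
  rw [hj1]
  have hmem : ((eB B (Fin.cast (by rw [starSet_fill B w]) j) : _) : Fin (ρ i)) ∉ B :=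
    Finset.mem_compl.1 (eB B _).2
  rw [fill, dif_neg hmem]
  simp

theorem D_U {N : ℕ}
    (S' : ∀ k, arels (fun p : (i : ι) × Finset (Fin (ρ i)) => ρ p.1 - p.2.card) k →
      (Fin k → Fin N) → Prop) :
    D ρ (U ρ S') = S' := by
  funext k r w
  obtain ⟨⟨i, B⟩, rfl⟩ := r
  show U ρ S' _ _ _ = _
  exact D_U_aux ρ S' B w _


/-! ### Syntactic translation -/

def tval : ∀ {m : ℕ}, (L1 ρ ℓ).Term (Empty ⊕ Fin m) → (Fin (ℓ + 1)) ⊕ Fin m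
  | _, .var (.inl e) => e.elim
  | _, .var (.inr i) => .inr i
  | _, @Term.func _ _ 0 c _ => .inl c
  | _, @Term.func _ _ (_ + 1) f _ => f.elim

def isStar {m : ℕ} (s : Fin m → Bool) : (Fin (ℓ + 1)) ⊕ Fin m → Bool
  | .inl c => decide (c = Fin.last ℓ)
  | .inr i => s i

def atomTerm {m : ℕ} (s : Fin m → Bool) :
    (a : (Fin (ℓ + 1)) ⊕ Fin m) → isStar ℓ s a = false →
      (L2 ρ ℓ).Term {i : Fin m // s i = false}
  | .inl c, h =>
    Term.func (L := L2 ρ ℓ) (l := 0)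
      (show Fin ℓ from c.castPred (by simpa [isStar] using h)) Fin.elim0
  | .inr i, h => Term.var ⟨i, h⟩

noncomputable def transEq {m : ℕ} (s : Fin m → Bool) (a b : (Fin (ℓ + 1)) ⊕ Fin m) :
    (L2 ρ ℓ).Formula {i : Fin m // s i = false} :=
  if ha : isStar ℓ s a = true then (if isStar ℓ s b = true then ⊤ else ⊥)
  else if hb : isStar ℓ s b = true then ⊥
  else Term.equal (atomTerm ρ ℓ s a (Bool.not_eq_true _ ▸ ha))
    (atomTerm ρ ℓ s b (Bool.not_eq_true _ ▸ hb))

noncomputable def transRel {m k : ℕ} (s : Fin m → Bool) (R : arels ρ k)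
    (as : Fin k → (Fin (ℓ + 1)) ⊕ Fin m) : (L2 ρ ℓ).Formula {i : Fin m // s i = false} :=
  let A : Finset (Fin k) := Finset.univ.filter (fun j => isStar ℓ s (as j) = true)
  let A' : Finset (Fin (ρ R.1)) := A.map (finCongr R.2.symm).toEmbedding
  Relations.formula (L := L2 ρ ℓ)
    (show arels (fun p : (i : ι) × Finset (Fin (ρ i)) => ρ p.1 - p.2.card) (ρ R.1 - A'.card)
      from ⟨⟨R.1, A'⟩, rfl⟩)
    (fun j => atomTerm ρ ℓ s
      (as ((eB A (Fin.cast (by simp [A', R.2]) j)).1))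
      (by
        have := (eB A (Fin.cast (by simp [A', R.2]) j)).2
        simp only [A, Finset.mem_compl, Finset.mem_filter, Finset.mem_univ, true_and] at this
        exact Bool.not_eq_true _ ▸ this))

def trueMap {m : ℕ} (s : Fin m → Bool) :
    {i : Fin (m + 1) // (Fin.snoc s true : Fin (m+1) → Bool) i = false} →
      {i : Fin m // s i = false} :=
  fun x => ⟨x.1.castPred (by
      intro h
      have := x.2
      rw [h] at this
      simp at this),
    by
      have := x.2
      rwa [← Fin.castSucc_castPred x.1 _, Fin.snoc_castSucc] at this⟩

def falseMap {m : ℕ} (s : Fin m → Bool) :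
    {i : Fin (m + 1) // (Fin.snoc s false : Fin (m+1) → Bool) i = false} →
      {i : Fin m // s i = false} ⊕ Unit :=
  fun x => if h : x.1 = Fin.last m then Sum.inr () else
    Sum.inl ⟨x.1.castPred h, by
      have := x.2
      rwa [← Fin.castSucc_castPred x.1 h, Fin.snoc_castSucc] at this⟩

noncomputable def T : ∀ {m : ℕ} (s : Fin m → Bool), (L1 ρ ℓ).BoundedFormula Empty m →
    (L2 ρ ℓ).Formula {i : Fin m // s i = false}
  | _, _, .falsum => ⊥
  | _, s, .equal t₁ t₂ => transEq ρ ℓ s (tval ρ ℓ t₁) (tval ρ ℓ t₂)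
  | _, s, .rel R ts => transRel ρ ℓ s R (fun j => tval ρ ℓ (ts j))
  | _, s, .imp ψ₁ ψ₂ => (T s ψ₁).imp (T s ψ₂)
  | _, s, .all ψ =>
      (Formula.relabel (trueMap s) (T (Fin.snoc s true) ψ)) ⊓
      Formula.iAlls Unit ((T (Fin.snoc s false) ψ).relabel (falseMap s))

/-! ### Semantics of the translation -/

def cplus {N : ℕ} (c : Fin ℓ → Fin N) : Fin (ℓ + 1) → Fin (N + 1) :=
  fun i => Fin.lastCases (Fin.last N) (fun i' => (c i').castSucc) i

theorem tval_realize {N m : ℕ} (cp : Fin (ℓ + 1) → Fin (N + 1))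
    (S : ∀ k, arels ρ k → (Fin k → Fin (N + 1)) → Prop) (v : Fin m → Fin (N + 1)) :
    ∀ t : (L1 ρ ℓ).Term (Empty ⊕ Fin m),
      (letI := cLang.mkStructure cp S;
        t.realize (Sum.elim (fun e : Empty => e.elim) v)) = Sum.elim cp v (tval ρ ℓ t)
  | .var (.inl e) => e.elim
  | .var (.inr i) => rfl
  | @Term.func _ _ 0 c _ => rfl
  | @Term.func _ _ (_ + 1) f _ => f.elim

theorem isStar_iff {N m : ℕ} (c : Fin ℓ → Fin N) (s : Fin m → Bool) (v : Fin m → Fin (N + 1))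
    (hs : ∀ i, s i = true ↔ v i = Fin.last N) (a : (Fin (ℓ + 1)) ⊕ Fin m) :
    isStar ℓ s a = true ↔ Sum.elim (cplus ℓ c) v a = Fin.last N := by
  cases a with
  | inl cc =>
    refine Fin.lastCases ?_ ?_ cc
    · simp [isStar, cplus]
    · intro i'
      simp [isStar, cplus, (Fin.castSucc_lt_last _).ne, (Fin.castSucc_lt_last i').ne]
  | inr i => simpa [isStar] using hs i

def low {N m : ℕ} (s : Fin m → Bool) (v : Fin m → Fin (N + 1))
    (hs : ∀ i, s i = true ↔ v i = Fin.last N) : {i : Fin m // s i = false} → Fin N :=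
  fun i => (v i.1).castPred (fun h => by
    have h2 := (hs i.1).2 h
    rw [i.2] at h2
    exact Bool.false_ne_true h2)


theorem cast_cast {n a : ℕ} (h1 : n = a) (h2 : a = n) (j : Fin n) :
    Fin.cast h2 (Fin.cast h1 j) = j := by
  apply Fin.ext
  simp

theorem cast_cast_cast {n a b : ℕ} (h1 : n = a) (h2 : a = b) (h3 : b = n) (j : Fin n) :
    Fin.cast h3 (Fin.cast h2 (Fin.cast h1 j)) = j := by
  apply Fin.ext
  simp

theorem atomTerm_realize {N m : ℕ} (c : Fin ℓ → Fin N)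
    (S2 : ∀ k, arels (fun p : (i : ι) × Finset (Fin (ρ i)) => ρ p.1 - p.2.card) k →
      (Fin k → Fin N) → Prop)
    (s : Fin m → Bool) (v : Fin m → Fin (N + 1))
    (hs : ∀ i, s i = true ↔ v i = Fin.last N)
    (a : (Fin (ℓ + 1)) ⊕ Fin m) (h : isStar ℓ s a = false) :
    (letI := cLang.mkStructure c S2;
      Fin.castSucc ((atomTerm ρ ℓ s a h).realize (low s v hs))) = Sum.elim (cplus ℓ c) v a := by
  cases a with
  | inl cc =>
    have hcc : cc ≠ Fin.last ℓ := by simpa [isStar] using h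
    have h2 : cplus ℓ c cc = (c (cc.castPred hcc)).castSucc := by
      conv_lhs => rw [← Fin.castSucc_castPred cc hcc]
      exact Fin.lastCases_castSucc _
    simp only [Sum.elim_inl, cplus] at h2 ⊢
    rw [h2]
    simp [atomTerm, cLang.mkStructure, Term.realize]
    rfl
  | inr i =>
    simp [atomTerm, low, Term.realize]

theorem realize_T {N : ℕ} (c : Fin ℓ → Fin N)
    (S : ∀ k, arels ρ k → (Fin k → Fin (N + 1)) → Prop) :
    ∀ {m : ℕ} (ψ : (L1 ρ ℓ).BoundedFormula Empty m) (s : Fin m → Bool)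
      (v : Fin m → Fin (N + 1)) (hs : ∀ i, s i = true ↔ v i = Fin.last N),
      (letI := cLang.mkStructure (cplus ℓ c) S;
        ψ.Realize (fun e : Empty => e.elim) v) ↔
      (letI := cLang.mkStructure c (D ρ S);
        (T ρ ℓ s ψ).Realize (low s v hs)) := by
  letI := cLang.mkStructure (cplus ℓ c) S
  letI := cLang.mkStructure c (D ρ S)
  intro m ψ
  induction ψ with
  | falsum =>
    intro s v hs
    simp [T, BoundedFormula.Realize, Formula.Realize]
  | equal t₁ t₂ =>
    intro s v hs
    have h₁ := tval_realize ρ ℓ (cplus ℓ c) S v t₁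
    have h₂ := tval_realize ρ ℓ (cplus ℓ c) S v t₂
    have hL : (letI := cLang.mkStructure (cplus ℓ c) S;
        BoundedFormula.Realize (L := L1 ρ ℓ) (.equal t₁ t₂) (fun e : Empty => e.elim) v) ↔
        Sum.elim (cplus ℓ c) v (tval ρ ℓ t₁) = Sum.elim (cplus ℓ c) v (tval ρ ℓ t₂) := by
      rw [← h₁, ← h₂]
      exact Iff.rfl
    rw [hL]
    simp only [T, transEq]
    split_ifs with ha hb hb
    · have hsa := (isStar_iff ℓ c s v hs _).1 ha
      have hsb := (isStar_iff ℓ c s v hs _).1 hb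
      simp [hsa, hsb, Formula.realize_top]
    · have hsa := (isStar_iff ℓ c s v hs _).1 ha
      have hsb : ¬ Sum.elim (cplus ℓ c) v (tval ρ ℓ t₂) = Fin.last N :=
        fun hh => hb ((isStar_iff ℓ c s v hs _).2 hh)
      simp only [hsa, Formula.realize_bot, iff_false]
      exact fun h => hsb h.symm
    · have hsb := (isStar_iff ℓ c s v hs _).1 hb
      have hsa : ¬ Sum.elim (cplus ℓ c) v (tval ρ ℓ t₁) = Fin.last N :=
        fun hh => ha ((isStar_iff ℓ c s v hs _).2 hh)
      simp [hsb, hsa, Formula.realize_bot]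
    · rw [Formula.realize_equal]
      rw [← atomTerm_realize ρ ℓ c (D ρ S) s v hs _ (Bool.not_eq_true _ ▸ ha),
        ← atomTerm_realize ρ ℓ c (D ρ S) s v hs _ (Bool.not_eq_true _ ▸ hb)]
      exact Fin.castSucc_inj
  | @rel m k R ts =>
    intro s v hs
    obtain ⟨i, hk⟩ := R
    subst hk
    have hT := fun j => tval_realize ρ ℓ (cplus ℓ c) S v (ts j)
    have hL : (BoundedFormula.rel (L := L1 ρ ℓ) (⟨i, rfl⟩ : arels ρ (ρ i)) ts).Realize
        (fun e : Empty => e.elim) v ↔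
        S (ρ i) ⟨i, rfl⟩ (fun j => Sum.elim (cplus ℓ c) v (tval ρ ℓ (ts j))) := by
      exact iff_of_eq (congrArg _ (funext hT))
    rw [hL]
    simp only [T, transRel, Formula.realize_rel]
    erw [Formula.realize_rel]
    show _ ↔ D ρ S _ _ _
    simp only [D]
    set A := Finset.filter (fun j => isStar ℓ s (tval ρ ℓ (ts j)) = true) Finset.univ with hAdef
    have hA : Finset.map (finCongr (Eq.refl (ρ i)).symm).toEmbedding A = A := by simp
    rw [fill_cast hA]
    refine iff_of_eq (congrArg _ ?_)
    funext j
    by_cases hj : j ∈ A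
    · simp only [fill]
      rw [dif_pos hj]
      exact (isStar_iff ℓ c s v hs _).1 (by simpa [hAdef] using hj)
    · simp only [fill]
      rw [dif_neg hj]
      have main : ∀ (x : Fin (ρ i)) (_hx : x = j) (h : isStar ℓ s (tval ρ ℓ (ts x)) = false),
          Sum.elim (cplus ℓ c) v (tval ρ ℓ (ts j)) =
            (Term.realize (low s v hs) (atomTerm ρ ℓ s (tval ρ ℓ (ts x)) h)).castSucc := by
        intro x hx h
        subst hx
        exact (atomTerm_realize ρ ℓ c (D ρ S) s v hs _ h).symm
      refine main _ ?_ _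
      rw [cast_cast_cast, OrderIso.apply_symm_apply]
  | imp ψ₁ ψ₂ ih₁ ih₂ =>
    intro s v hs
    show (_ → _) ↔ (_ → _)
    rw [ih₁ s v hs, ih₂ s v hs]
    exact Iff.rfl
  | @all m ψ ih =>
    intro s v hs
    have hsplit : (letI := cLang.mkStructure (cplus ℓ c) S;
        BoundedFormula.Realize (L := L1 ρ ℓ) ψ.all (fun e : Empty => e.elim) v) ↔
        ((letI := cLang.mkStructure (cplus ℓ c) S;
          ψ.Realize (fun e : Empty => e.elim) (Fin.snoc v (Fin.last N))) ∧
         ∀ y : Fin N, (letI := cLang.mkStructure (cplus ℓ c) S;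
          ψ.Realize (fun e : Empty => e.elim) (Fin.snoc v y.castSucc))) := by
      constructor
      · intro h
        exact ⟨h _, fun y => h _⟩
      · rintro ⟨h1, h2⟩ x
        exact Fin.lastCases h1 h2 x
    rw [hsplit]
    simp only [T]
    rw [Formula.realize_inf]
    apply and_congr
    · rw [Formula.realize_relabel]
      have hs₁ : ∀ i : Fin (m + 1), (Fin.snoc s true : Fin (m+1) → Bool) i = true ↔
          (Fin.snoc v (Fin.last N) : Fin (m+1) → Fin (N+1)) i = Fin.last N := by
        intro i
        refine Fin.lastCases ?_ ?_ i
        · simp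
        · intro i'
          simpa using hs i'
      rw [ih (Fin.snoc s true) (Fin.snoc v (Fin.last N)) hs₁]
      have hlow : low (Fin.snoc s true) (Fin.snoc v (Fin.last N)) hs₁
          = low s v hs ∘ trueMap s := by
        funext x
        have hne : x.1 ≠ Fin.last m := by
          intro hh
          have := x.2
          rw [hh] at this
          simp at this
        apply Fin.ext
        simp only [low, Function.comp_apply, trueMap, Fin.coe_castPred]
        conv_lhs => rw [← Fin.castSucc_castPred x.1 hne, Fin.snoc_castSucc]
      rw [hlow]
    · rw [Formula.realize_iAlls]
      simp only [Formula.realize_relabel]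
      have key : ∀ y : Fin N,
          ((letI := cLang.mkStructure (cplus ℓ c) S;
            ψ.Realize (fun e : Empty => e.elim) (Fin.snoc v y.castSucc)) ↔
           (letI := cLang.mkStructure c (D ρ S);
            (T ρ ℓ (Fin.snoc s false) ψ).Realize
              (fun a => Sum.elim (low s v hs) (fun _ : Unit => y) (falseMap s a)))) := by
        intro y
        have hs₂ : ∀ i : Fin (m + 1), (Fin.snoc s false : Fin (m+1) → Bool) i = true ↔
            (Fin.snoc v y.castSucc : Fin (m+1) → Fin (N+1)) i = Fin.last N := by
          intro i
          refine Fin.lastCases ?_ ?_ i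
          · simp [(Fin.castSucc_lt_last y).ne]
          · intro i'
            simpa using hs i'
        rw [ih (Fin.snoc s false) (Fin.snoc v y.castSucc) hs₂]
        have hlow : low (Fin.snoc s false) (Fin.snoc v y.castSucc) hs₂
            = fun a => Sum.elim (low s v hs) (fun _ : Unit => y) (falseMap s a) := by
          funext x
          by_cases hx : x.1 = Fin.last m
          · rw [falseMap, dif_pos hx]
            apply Fin.ext
            simp [low, hx]
          · rw [falseMap, dif_neg hx]
            apply Fin.ext
            simp only [low, Sum.elim_inl, Fin.coe_castPred]
            conv_lhs => rw [← Fin.castSucc_castPred x.1 hx, Fin.snoc_castSucc]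
        rw [hlow]
      exact ⟨fun h iu => (key (iu ())).1 (h (iu ())), fun h y => (key y).2 (h (fun _ => y))⟩


/-- The translated sentence. -/
noncomputable def sentT (φ : (L1 ρ ℓ).Sentence) : (L2 ρ ℓ).Sentence :=
  Formula.relabel
    (fun x : {i : Fin 0 // (fun _ => false : Fin 0 → Bool) i = false} => x.1.elim0)
    (T ρ ℓ (fun _ => false) φ)

theorem bf_realize_congr {L : Language} {M : Type} [L.Structure M]
    {φ : L.BoundedFormula Empty 0} (v v' : Empty → M) (xs xs' : Fin 0 → M) :
    BoundedFormula.Realize φ v xs ↔ BoundedFormula.Realize φ v' xs' := by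
  rw [show v = v' from funext fun e => e.elim,
    show xs = xs' from funext fun x => x.elim0]

theorem realize_sentT {N : ℕ} (c : Fin ℓ → Fin N)
    (S : ∀ k, arels ρ k → (Fin k → Fin (N + 1)) → Prop) (φ : (L1 ρ ℓ).Sentence) :
    (letI := cLang.mkStructure (cplus ℓ c) S; Fin (N + 1) ⊨ φ) ↔
    (letI := cLang.mkStructure c (D ρ S); Fin N ⊨ sentT ρ ℓ φ) := by
  letI := cLang.mkStructure (cplus ℓ c) S
  letI := cLang.mkStructure c (D ρ S)
  have h := realize_T ρ ℓ c S φ (fun _ => false) (default : Fin 0 → Fin (N + 1))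
    (fun i => i.elim0)
  have h1 : (Fin (N + 1) ⊨ φ) ↔
      BoundedFormula.Realize (M := Fin (N + 1)) φ (fun e : Empty => e.elim)
        (default : Fin 0 → Fin (N + 1)) :=
    bf_realize_congr _ _ _ _
  have h2 : (Fin N ⊨ sentT ρ ℓ φ) ↔ Formula.Realize (M := Fin N)
      (T ρ ℓ (fun _ => false) φ)
      ((default : Empty → Fin N) ∘
        (fun x : {i : Fin 0 // (fun _ => false : Fin 0 → Bool) i = false} => x.1.elim0)) :=
    Formula.realize_relabel
  exact h1.trans (h.trans ((iff_of_eq (congrArg _ (funext fun x =>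
    (x.1 : Fin 0).elim0))).trans h2.symm))

end RC

/-- **Removing a single constant with higher arities.**
Let τ have ℓ+1 constant symbols and relation symbols indexed by the finite type ι with
arities ρ.  Let τ' have the constant symbols a₁,…,a_ℓ and, for each i : ι and each
subset A ⊆ [ρ i], a relation symbol R_{i,A} of arity ρ i − |A| (R_{i,∅} being identified
with R_i).  Then there is a single first-order sentence φ' over τ' with
f_φ(n) = f_{φ'}(n) for all n.  In particular τ' has the same maximum arity as τ and no
new relation symbols of that maximum arity. -/
theorem remove_single_constant_higher_arity (ι : Type) [Fintype ι] (ρ : ι → ℕ) (ℓ : ℕ)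
    (φ : (cLang (ℓ + 1) (arels ρ)).Sentence) :
    ∃ φ' : (cLang ℓ (arels (fun p : (i : ι) × Finset (Fin (ρ i)) =>
        ρ p.1 - p.2.card))).Sentence,
      ∀ n : ℕ, fCount (ℓ + 1) φ n = fCount ℓ φ' n := by
  refine ⟨RC.sentT ρ ℓ φ, fun n => ?_⟩
  have hcp : (fun i : Fin (ℓ + 1) => (Fin.natAdd n i : Fin (n + (ℓ + 1))))
      = RC.cplus ℓ (fun i : Fin ℓ => (Fin.natAdd n i : Fin (n + ℓ))) := by
    funext i
    refine Fin.lastCases ?_ ?_ i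
    · apply Fin.ext
      simp [RC.cplus]
    · intro i'
      apply Fin.ext
      simp [RC.cplus]
  unfold fCount
  rw [hcp]
  apply Nat.card_congr
  refine Equiv.subtypeEquiv
    ⟨RC.D ρ, RC.U ρ, fun S => RC.U_D ρ S, fun S' => RC.D_U ρ S'⟩ (fun S => ?_)
  exact RC.realize_sentT ρ ℓ (fun i => Fin.natAdd n i) S φ
end
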